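/- arXiv:2304.05467 — 6 statements merged into one kernel-verified Lean document; each statement's English description precedes it below -/
import Mathlib

section
/- Let a > 0 and b be real numbers and let x, z be complex numbers. Then the symmetric truncated integrals ∫_{-B}^{B} (x·(iω) + x·a + z·b) / ((iω)² + 2a·(iω) + a² + b²) dω converge to π·x as B → ∞. -/
open Filter intervalIntegral Real Complex

private lemma aux_arctan_int (a c : ℝ) (ha : 0 < a) (B : ℝ) :
    ∫ ω : ℝ in (-B)..B, a / (a ^ 2 + (ω + c) ^ 2)
      = Real.arctan ((B + c) / a) - Real.arctan ((-B + c) / a) := by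
  have h := intervalIntegral.integral_eq_sub_of_hasDerivAt
    (f := fun ω : ℝ => Real.arctan ((ω + c) / a))
    (f' := fun ω : ℝ => a / (a ^ 2 + (ω + c) ^ 2)) (a := -B) (b := B)
    (fun ω _ => by
      have h1 : HasDerivAt (fun ω : ℝ => (ω + c) / a) (1 / a) ω := by
        simpa using (((hasDerivAt_id ω).add_const c).div_const a)
      have h2 := (Real.hasDerivAt_arctan ((ω + c) / a)).comp ω h1
      refine h2.congr_deriv ?_
      have hden : (1 : ℝ) + ((ω + c) / a) ^ 2 ≠ 0 := by positivity
      field_simp)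
    (by
      apply Continuous.intervalIntegrable
      have : ∀ ω : ℝ, a ^ 2 + (ω + c) ^ 2 ≠ 0 := fun ω => by positivity
      exact continuous_const.div (by continuity) this)
  simpa using h

private lemma aux_log_int (a c : ℝ) (ha : 0 < a) (B : ℝ) :
    ∫ ω : ℝ in (-B)..B, (ω + c) / (a ^ 2 + (ω + c) ^ 2)
      = Real.log (a ^ 2 + (B + c) ^ 2) / 2 - Real.log (a ^ 2 + (-B + c) ^ 2) / 2 := by
  have h := intervalIntegral.integral_eq_sub_of_hasDerivAt
    (f := fun ω : ℝ => Real.log (a ^ 2 + (ω + c) ^ 2) / 2)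
    (f' := fun ω : ℝ => (ω + c) / (a ^ 2 + (ω + c) ^ 2)) (a := -B) (b := B)
    (fun ω _ => by
      have hden : a ^ 2 + (ω + c) ^ 2 ≠ 0 := by positivity
      have h1 : HasDerivAt (fun ω : ℝ => a ^ 2 + (ω + c) ^ 2) (2 * (ω + c)) ω := by
        have := (((hasDerivAt_id ω).add_const c).pow 2).const_add (a ^ 2)
        simpa [mul_comm] using this
      have h2 := ((Real.hasDerivAt_log hden).comp ω h1).div_const 2
      refine h2.congr_deriv ?_
      field_simp)
    (by
      apply Continuous.intervalIntegrable
      have : ∀ ω : ℝ, a ^ 2 + (ω + c) ^ 2 ≠ 0 := fun ω => by positivity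
      exact (continuous_id.add continuous_const).div (by continuity) this)
  simpa using h

private lemma aux_arctan_lim (a c : ℝ) (ha : 0 < a) :
    Tendsto (fun B : ℝ => ∫ ω : ℝ in (-B)..B, a / (a ^ 2 + (ω + c) ^ 2))
      atTop (nhds Real.pi) := by
  have h1 : Tendsto (fun B : ℝ => (B + c) / a) atTop atTop :=
    (tendsto_atTop_add_const_right _ c tendsto_id).atTop_div_const ha
  have h2 : Tendsto (fun B : ℝ => (-B + c) / a) atTop atBot := by
    apply Tendsto.atBot_div_const ha
    simpa using (tendsto_neg_atBot_iff.mpr tendsto_id).atBot_add tendsto_const_nhds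
  have ht : Tendsto (fun B : ℝ => Real.arctan ((B + c) / a) - Real.arctan ((-B + c) / a))
      atTop (nhds (Real.pi / 2 - -(Real.pi / 2))) :=
    ((Real.tendsto_arctan_atTop.mono_right nhdsWithin_le_nhds).comp h1).sub
      ((Real.tendsto_arctan_atBot.mono_right nhdsWithin_le_nhds).comp h2)
  have : Real.pi / 2 - -(Real.pi / 2) = Real.pi := by ring
  rw [this] at ht
  exact ht.congr (fun B => (aux_arctan_int a c ha B).symm)

private lemma aux_log_lim (a c : ℝ) (ha : 0 < a) :
    Tendsto (fun B : ℝ => ∫ ω : ℝ in (-B)..B, (ω + c) / (a ^ 2 + (ω + c) ^ 2))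
      atTop (nhds 0) := by
  have key : Tendsto (fun B : ℝ => (a ^ 2 + (B + c) ^ 2) / (a ^ 2 + (-B + c) ^ 2))
      atTop (nhds 1) := by
    have hinv : Tendsto (fun B : ℝ => a / B) atTop (nhds 0) :=
      tendsto_const_nhds.div_atTop tendsto_id
    have hc : Tendsto (fun B : ℝ => c / B) atTop (nhds 0) :=
      tendsto_const_nhds.div_atTop tendsto_id
    have hnum : Tendsto (fun B : ℝ => (a / B) ^ 2 + (1 + c / B) ^ 2) atTop (nhds 1) := by
      have := ((hinv.pow 2).add (((tendsto_const_nhds (x := (1:ℝ))).add hc).pow 2))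
      simpa using this
    have hden : Tendsto (fun B : ℝ => (a / B) ^ 2 + (1 - c / B) ^ 2) atTop (nhds 1) := by
      have := ((hinv.pow 2).add (((tendsto_const_nhds (x := (1:ℝ))).sub hc).pow 2))
      simpa using this
    have := hnum.div hden one_ne_zero
    rw [div_one] at this
    apply this.congr'
    filter_upwards [eventually_gt_atTop (0 : ℝ)] with B hB
    have hB' : B ≠ 0 := hB.ne'
    have hd1 : a ^ 2 + (-B + c) ^ 2 ≠ 0 := by positivity
    have hd2 : (a / B) ^ 2 + (1 - c / B) ^ 2 ≠ 0 := by
      have : a / B ≠ 0 := div_ne_zero ha.ne' hB'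
      positivity
    simp only [Pi.div_apply]
    rw [div_eq_div_iff hd2 hd1]
    field_simp
    try ring
    try exact Or.inl trivial
  have hlog : Tendsto (fun B : ℝ =>
      Real.log ((a ^ 2 + (B + c) ^ 2) / (a ^ 2 + (-B + c) ^ 2))) atTop (nhds 0) := by
    have := (Real.continuousAt_log one_ne_zero).tendsto.comp key
    simpa [Function.comp_def] using this
  have heq : ∀ B : ℝ,
      Real.log ((a ^ 2 + (B + c) ^ 2) / (a ^ 2 + (-B + c) ^ 2))
        = Real.log (a ^ 2 + (B + c) ^ 2) - Real.log (a ^ 2 + (-B + c) ^ 2) := fun B => by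
    have h1 : a ^ 2 + (B + c) ^ 2 ≠ 0 := by positivity
    have h2 : a ^ 2 + (-B + c) ^ 2 ≠ 0 := by positivity
    exact Real.log_div h1 h2
  have ht : Tendsto (fun B : ℝ =>
      (Real.log (a ^ 2 + (B + c) ^ 2) - Real.log (a ^ 2 + (-B + c) ^ 2)) / 2)
      atTop (nhds 0) := by
    have := (hlog.congr (fun B => heq B)).div_const 2
    simpa using this
  apply ht.congr (fun B => ?_)
  rw [aux_log_int a c ha B]
  ring

private lemma aux_ne (a : ℝ) (ha : 0 < a) (t : ℝ) : ((a : ℂ) + Complex.I * (t : ℂ)) ≠ 0 := by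
  intro h
  have := congrArg Complex.re h
  simp [Complex.add_re, Complex.mul_re] at this
  exact ha.ne' this

private lemma aux_complex_lim (a c : ℝ) (ha : 0 < a) :
    Tendsto (fun B : ℝ => ∫ ω : ℝ in (-B)..B, ((a : ℂ) + Complex.I * ((ω : ℂ) + (c : ℂ)))⁻¹)
      atTop (nhds (Real.pi : ℂ)) := by
  have hpt : ∀ ω : ℝ, ((a : ℂ) + Complex.I * ((ω : ℂ) + (c : ℂ)))⁻¹
      = ((a / (a ^ 2 + (ω + c) ^ 2) : ℝ) : ℂ)
        - Complex.I * (((ω + c) / (a ^ 2 + (ω + c) ^ 2) : ℝ) : ℂ) := by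
    intro ω
    have hden : (a : ℝ) ^ 2 + (ω + c) ^ 2 ≠ 0 := by positivity
    have h1 : ((a : ℂ) + Complex.I * ((ω : ℂ) + (c : ℂ))) ≠ 0 := by
      have := aux_ne a ha (ω + c)
      push_cast at this ⊢
      exact this
    have hdenC : ((a : ℂ) ^ 2 + ((ω : ℂ) + (c : ℂ)) ^ 2) ≠ 0 := by
      have := Complex.ofReal_ne_zero.mpr hden
      push_cast at this
      exact this
    rw [eq_comm]
    apply eq_inv_of_mul_eq_one_left
    push_cast
    field_simp
    linear_combination (-((ω : ℂ) + c) ^ 2) * Complex.I_sq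
  have hcont1 : Continuous fun ω : ℝ => a / (a ^ 2 + (ω + c) ^ 2) :=
    continuous_const.div (by continuity) (fun ω => by positivity)
  have hcont2 : Continuous fun ω : ℝ => (ω + c) / (a ^ 2 + (ω + c) ^ 2) :=
    (continuous_id.add continuous_const).div (by continuity) (fun ω => by positivity)
  have heq : ∀ B : ℝ, (∫ ω : ℝ in (-B)..B, ((a : ℂ) + Complex.I * ((ω : ℂ) + (c : ℂ)))⁻¹)
      = ((∫ ω : ℝ in (-B)..B, a / (a ^ 2 + (ω + c) ^ 2) : ℝ) : ℂ)
        - Complex.I * ((∫ ω : ℝ in (-B)..B, (ω + c) / (a ^ 2 + (ω + c) ^ 2) : ℝ) : ℂ) := by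
    intro B
    rw [show (fun ω : ℝ => ((a : ℂ) + Complex.I * ((ω : ℂ) + (c : ℂ)))⁻¹)
        = fun ω : ℝ => ((a / (a ^ 2 + (ω + c) ^ 2) : ℝ) : ℂ)
          - Complex.I * (((ω + c) / (a ^ 2 + (ω + c) ^ 2) : ℝ) : ℂ) from funext hpt]
    rw [intervalIntegral.integral_sub, intervalIntegral.integral_const_mul,
      intervalIntegral.integral_ofReal, intervalIntegral.integral_ofReal]
    · exact ((Complex.continuous_ofReal.comp hcont1)).intervalIntegrable _ _
    · exact (continuous_const.mul (Complex.continuous_ofReal.comp hcont2)).intervalIntegrable _ _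
  have ht : Tendsto (fun B : ℝ =>
      ((∫ ω : ℝ in (-B)..B, a / (a ^ 2 + (ω + c) ^ 2) : ℝ) : ℂ)
        - Complex.I * ((∫ ω : ℝ in (-B)..B, (ω + c) / (a ^ 2 + (ω + c) ^ 2) : ℝ) : ℂ))
      atTop (nhds ((Real.pi : ℂ) - Complex.I * ((0 : ℝ) : ℂ))) := by
    exact ((Complex.continuous_ofReal.tendsto _).comp (aux_arctan_lim a c ha)).sub
      (((Complex.continuous_ofReal.tendsto _).comp (aux_log_lim a c ha)).const_mul _)
  simp only [Complex.ofReal_zero, mul_zero, sub_zero] at ht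
  exact ht.congr (fun B => (heq B).symm)

theorem summand_truncated_integral_tendsto_pi_smul (a b : ℝ) (ha : 0 < a) (x z : ℂ) :
    Filter.Tendsto
      (fun B : ℝ => ∫ ω : ℝ in (-B)..B,
        (x * (Complex.I * ω) + x * a + z * b) /
          ((Complex.I * ω) ^ 2 + 2 * a * (Complex.I * ω) + (a : ℂ) ^ 2 + (b : ℂ) ^ 2))
      Filter.atTop (nhds ((Real.pi : ℂ) * x)) := by
  set α : ℂ := (x + Complex.I * z) / 2
  set β : ℂ := (x - Complex.I * z) / 2
  have hpt : ∀ ω : ℝ,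
      (x * (Complex.I * ω) + x * a + z * b) /
          ((Complex.I * ω) ^ 2 + 2 * a * (Complex.I * ω) + (a : ℂ) ^ 2 + (b : ℂ) ^ 2)
        = α * ((a : ℂ) + Complex.I * ((ω : ℂ) + (b : ℂ)))⁻¹
          + β * ((a : ℂ) + Complex.I * ((ω : ℂ) + (-b : ℝ)))⁻¹ := by
    intro ω
    have h1 : ((a : ℂ) + Complex.I * ((ω : ℂ) + (b : ℂ))) ≠ 0 := by
      have := aux_ne a ha (ω + b); push_cast at this ⊢; exact this
    have h2 : ((a : ℂ) + Complex.I * ((ω : ℂ) + ((-b : ℝ) : ℂ))) ≠ 0 := by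
      have := aux_ne a ha (ω + (-b)); push_cast at this ⊢; exact this
    have hD : (Complex.I * ω) ^ 2 + 2 * a * (Complex.I * ω) + (a : ℂ) ^ 2 + (b : ℂ) ^ 2
        = ((a : ℂ) + Complex.I * ((ω : ℂ) + (b : ℂ)))
          * ((a : ℂ) + Complex.I * ((ω : ℂ) + ((-b : ℝ) : ℂ))) := by
      push_cast
      ring_nf
      simp [Complex.I_sq]
      ring
    have hnum : α * ((a : ℂ) + Complex.I * ((ω : ℂ) + ((-b : ℝ) : ℂ)))
        + β * ((a : ℂ) + Complex.I * ((ω : ℂ) + (b : ℂ)))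
        = x * (Complex.I * ω) + x * a + z * b := by
      simp only [α, β]
      push_cast
      linear_combination (-(b : ℂ) * z) * Complex.I_sq
    have hsplit : α * ((a : ℂ) + Complex.I * ((ω : ℂ) + (b : ℂ)))⁻¹
        + β * ((a : ℂ) + Complex.I * ((ω : ℂ) + ((-b : ℝ) : ℂ)))⁻¹
        = (α * ((a : ℂ) + Complex.I * ((ω : ℂ) + ((-b : ℝ) : ℂ)))
            + β * ((a : ℂ) + Complex.I * ((ω : ℂ) + (b : ℂ))))
          / (((a : ℂ) + Complex.I * ((ω : ℂ) + (b : ℂ)))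
            * ((a : ℂ) + Complex.I * ((ω : ℂ) + ((-b : ℝ) : ℂ)))) := by
      simp only [← div_eq_mul_inv]
      rw [div_add_div _ _ h1 h2]
      ring_nf
    rw [hD, hsplit, hnum]
  have hcont : ∀ c : ℝ, Continuous fun ω : ℝ => ((a : ℂ) + Complex.I * ((ω : ℂ) + (c : ℂ)))⁻¹ := by
    intro c
    apply Continuous.inv₀
    · continuity
    · intro ω
      have := aux_ne a ha (ω + c); push_cast at this ⊢; exact this
  have heq : ∀ B : ℝ,
      (∫ ω : ℝ in (-B)..B,
        (x * (Complex.I * ω) + x * a + z * b) /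
          ((Complex.I * ω) ^ 2 + 2 * a * (Complex.I * ω) + (a : ℂ) ^ 2 + (b : ℂ) ^ 2))
        = α * (∫ ω : ℝ in (-B)..B, ((a : ℂ) + Complex.I * ((ω : ℂ) + (b : ℂ)))⁻¹)
          + β * (∫ ω : ℝ in (-B)..B, ((a : ℂ) + Complex.I * ((ω : ℂ) + ((-b : ℝ) : ℂ)))⁻¹) := by
    intro B
    rw [intervalIntegral.integral_congr (g := fun ω : ℝ =>
        α * ((a : ℂ) + Complex.I * ((ω : ℂ) + (b : ℂ)))⁻¹
          + β * ((a : ℂ) + Complex.I * ((ω : ℂ) + ((-b : ℝ) : ℂ)))⁻¹)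
        (fun ω _ => hpt ω)]
    rw [intervalIntegral.integral_add, intervalIntegral.integral_const_mul,
      intervalIntegral.integral_const_mul]
    · exact (continuous_const.mul (hcont b)).intervalIntegrable _ _
    · exact (continuous_const.mul (hcont (-b))).intervalIntegrable _ _
  have ht := ((aux_complex_lim a b ha).const_mul α).add
    ((aux_complex_lim a (-b) ha).const_mul β)
  have hval : α * (Real.pi : ℂ) + β * (Real.pi : ℂ) = (Real.pi : ℂ) * x := by
    simp only [α, β]; ring
  rw [hval] at ht
  exact ht.congr (fun B => (heq B).symm)
end

section
/- Let n be a finite index type and N a natural number. For i = 1,…,N let a_i > 0 and b_i be real numbers and X_i, Z_i real n×n matrices (viewed as complex matrices). Define Ψ_Y(iω) = Σ_{i=1}^{N} ((iω + a_i)·X_i + b_i·Z_i) / ((iω + a_i)² + b_i²) and Y(iω) = Ψ_Y(iω) + Ψ_Y(iω)ᴴ, where ᴴ denotes conjugate transpose. Then the real-valued function ω ↦ Re(trace Y(iω)) is Lebesgue integrable on ℝ, and (1/(2π)) ∫_{ℝ} Re(trace Y(iω)) dω = Σ_{i=1}^{N} trace(X_i). -/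
open Matrix MeasureTheory Filter Real Topology

noncomputable def ff (a b x z : ℝ) (ω : ℝ) : ℝ :=
  x * a / (a^2 + (ω+b)^2) + x * a / (a^2 + (ω-b)^2)
    + 2 * z * b * (a^2 + b^2 - ω^2) / ((a^2 + (ω+b)^2) * (a^2 + (ω-b)^2))

noncomputable def GG (a b x z : ℝ) (ω : ℝ) : ℝ :=
  x * arctan ((ω+b)/a) + x * arctan ((ω-b)/a)
    + z/2 * (Real.log (a^2+(ω+b)^2) - Real.log (a^2+(ω-b)^2))

lemma rat_eq (a b x z : ℝ) (ha : 0 < a) (ω : ℝ) :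
    2 * (((Complex.I * ω + a) ^ 2 + (b:ℂ) ^ 2)⁻¹ * ((Complex.I * ω + a) * x + (b:ℂ) * z)).re
      = ff a b x z ω := by
  have hp : (0:ℝ) < a*a + (ω+b)*(ω+b) := add_pos_of_pos_of_nonneg (mul_pos ha ha) (mul_self_nonneg _)
  have hq : (0:ℝ) < a*a + (ω-b)*(ω-b) := add_pos_of_pos_of_nonneg (mul_pos ha ha) (mul_self_nonneg _)
  unfold ff
  rw [inv_mul_eq_div, Complex.div_re]
  have hns : Complex.normSq ((Complex.I * ω + a) ^ 2 + (b:ℂ) ^ 2)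
      = (a^2 + (ω+b)^2) * (a^2 + (ω-b)^2) := by
    simp [Complex.normSq_apply, Complex.add_re, Complex.add_im, Complex.mul_re, Complex.mul_im,
      pow_two]
    ring
  rw [hns]
  simp only [Complex.add_re, Complex.add_im, Complex.mul_re, Complex.mul_im, Complex.I_re,
    Complex.I_im, Complex.ofReal_re, Complex.ofReal_im, pow_two]
  field_simp
  ring

lemma int_inv (a c : ℝ) (ha : 0 < a) :
    Integrable (fun t : ℝ => (a^2 + (t+c)^2)⁻¹) := by
  have h2 := (integrable_inv_one_add_sq.comp_mul_left' (show a⁻¹ ≠ 0 by positivity)).const_mul ((a^2)⁻¹)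
  have h3 := h2.comp_add_right c
  refine h3.congr (Filter.Eventually.of_forall fun t => ?_)
  show (a^2)⁻¹ * (1 + (a⁻¹ * (t + c))^2)⁻¹ = (a^2 + (t+c)^2)⁻¹
  rw [← mul_inv]; congr 1; field_simp

lemma ff_bound (a b x z : ℝ) (ha : 0 < a) (ω : ℝ) :
    |ff a b x z ω| ≤ (|x| * a + |z| * |b|) * ((a^2 + (ω+b)^2)⁻¹ + (a^2 + (ω-b)^2)⁻¹) := by
  have hp : (0:ℝ) < a^2 + (ω+b)^2 := by positivity
  have hq : (0:ℝ) < a^2 + (ω-b)^2 := by positivity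
  have h1 : |x * a / (a^2 + (ω+b)^2)| = |x| * a * (a^2 + (ω+b)^2)⁻¹ := by
    rw [abs_div, abs_mul, abs_of_pos ha, abs_of_pos hp, div_eq_mul_inv]
  have h2 : |x * a / (a^2 + (ω-b)^2)| = |x| * a * (a^2 + (ω-b)^2)⁻¹ := by
    rw [abs_div, abs_mul, abs_of_pos ha, abs_of_pos hq, div_eq_mul_inv]
  have hE : |a^2 + b^2 - ω^2| ≤ ((a^2 + (ω+b)^2) + (a^2 + (ω-b)^2)) / 2 :=
    abs_le.mpr ⟨by nlinarith, by nlinarith⟩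
  have hnum : |2 * z * b * (a^2 + b^2 - ω^2)| ≤ |z| * |b| * ((a^2 + (ω+b)^2) + (a^2 + (ω-b)^2)) := by
    calc |2 * z * b * (a^2 + b^2 - ω^2)| = |z| * |b| * (2 * |a^2 + b^2 - ω^2|) := by
          rw [abs_mul, abs_mul, abs_mul, abs_two]; ring
      _ ≤ |z| * |b| * ((a^2 + (ω+b)^2) + (a^2 + (ω-b)^2)) :=
          mul_le_mul_of_nonneg_left (by linarith) (by positivity)
  have h3 : |2 * z * b * (a^2 + b^2 - ω^2) / ((a^2 + (ω+b)^2) * (a^2 + (ω-b)^2))|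
      ≤ |z| * |b| * ((a^2 + (ω+b)^2)⁻¹ + (a^2 + (ω-b)^2)⁻¹) := by
    rw [abs_div, abs_of_pos (mul_pos hp hq), inv_add_inv hp.ne' hq.ne', ← mul_div_assoc]
    exact (div_le_div_iff_of_pos_right (mul_pos hp hq)).mpr hnum
  calc |ff a b x z ω| ≤ |x * a / (a^2 + (ω+b)^2)| + |x * a / (a^2 + (ω-b)^2)|
        + |2 * z * b * (a^2 + b^2 - ω^2) / ((a^2 + (ω+b)^2) * (a^2 + (ω-b)^2))| := by
        unfold ff; exact (abs_add_le _ _).trans (by gcongr; exact abs_add_le _ _)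
    _ ≤ (|x| * a + |z| * |b|) * ((a^2 + (ω+b)^2)⁻¹ + (a^2 + (ω-b)^2)⁻¹) := by
        rw [h1, h2]; nlinarith [h3, abs_nonneg x, inv_pos.mpr hp, inv_pos.mpr hq]

lemma ff_cont (a b x z : ℝ) (ha : 0 < a) : Continuous (ff a b x z) := by
  have hp : ∀ ω : ℝ, (a^2 + (ω+b)^2) ≠ 0 := fun ω => by positivity
  have hq : ∀ ω : ℝ, (a^2 + (ω-b)^2) ≠ 0 := fun ω => by positivity
  unfold ff
  refine ((continuous_const.div (by continuity) hp).add (continuous_const.div (by continuity) hq)).add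
    ((by continuity : Continuous fun ω : ℝ => 2*z*b*(a^2+b^2-ω^2)).div (by continuity)
      fun ω => mul_ne_zero (hp ω) (hq ω))

lemma ff_integrable (a b x z : ℝ) (ha : 0 < a) : Integrable (ff a b x z) := by
  have hg : Integrable (fun ω : ℝ => (|x| * a + |z| * |b|) * ((a^2 + (ω+b)^2)⁻¹ + (a^2 + (ω-b)^2)⁻¹)) := by
    refine Integrable.const_mul ?_ _
    have h2 := int_inv a (-b) ha
    have h3 := (int_inv a b ha).add h2; simp only [sub_eq_add_neg]; exact h3
  exact hg.mono' (ff_cont a b x z ha).aestronglyMeasurable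
    (Filter.Eventually.of_forall fun ω => by rw [Real.norm_eq_abs]; exact ff_bound a b x z ha ω)

lemma GG_deriv (a b x z : ℝ) (ha : 0 < a) (ω : ℝ) :
    HasDerivAt (GG a b x z) (ff a b x z ω) ω := by
  have hp : (0:ℝ) < a^2 + (ω+b)^2 := by positivity
  have hq : (0:ℝ) < a^2 + (ω-b)^2 := by positivity
  have i1 : HasDerivAt (fun ω : ℝ => (ω+b)/a) (1/a) ω := by
    simpa using ((hasDerivAt_id ω).add_const b).div_const a
  have i2 : HasDerivAt (fun ω : ℝ => (ω-b)/a) (1/a) ω := by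
    simpa using ((hasDerivAt_id ω).sub_const b).div_const a
  have j1 : HasDerivAt (fun ω : ℝ => a^2 + (ω+b)^2) (2*(ω+b)) ω := by
    simpa using (((hasDerivAt_id ω).add_const b).pow 2).const_add (a^2)
  have j2 : HasDerivAt (fun ω : ℝ => a^2 + (ω-b)^2) (2*(ω-b)) ω := by
    simpa using (((hasDerivAt_id ω).sub_const b).pow 2).const_add (a^2)
  have h1 : HasDerivAt (fun ω : ℝ => arctan ((ω+b)/a)) (1/(1+((ω+b)/a)^2) * (1/a)) ω :=
    (Real.hasDerivAt_arctan _).comp ω i1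
  have h2 : HasDerivAt (fun ω : ℝ => arctan ((ω-b)/a)) (1/(1+((ω-b)/a)^2) * (1/a)) ω :=
    (Real.hasDerivAt_arctan _).comp ω i2
  have h3 : HasDerivAt (fun ω : ℝ => Real.log (a^2+(ω+b)^2)) (2*(ω+b)/(a^2+(ω+b)^2)) ω :=
    j1.log hp.ne'
  have h4 : HasDerivAt (fun ω : ℝ => Real.log (a^2+(ω-b)^2)) (2*(ω-b)/(a^2+(ω-b)^2)) ω :=
    j2.log hq.ne'
  have H := ((h1.const_mul x).add (h2.const_mul x)).add ((h3.sub h4).const_mul (z/2))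
  refine H.congr_deriv ?_
  unfold ff
  have h1a : (1:ℝ) + ((ω+b)/a)^2 ≠ 0 := by positivity
  have h2a : (1:ℝ) + ((ω-b)/a)^2 ≠ 0 := by positivity
  field_simp
  ring

lemma arctan_aff_top (a c : ℝ) (ha : 0 < a) :
    Tendsto (fun ω : ℝ => arctan ((ω+c)/a)) atTop (𝓝 (π/2)) := by
  refine (tendsto_nhds_of_tendsto_nhdsWithin Real.tendsto_arctan_atTop).comp ?_
  exact (tendsto_atTop_add_const_right atTop c tendsto_id).atTop_div_const ha

lemma log_part_top (a c : ℝ) (ha : 0 < a) :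
    Tendsto (fun ω : ℝ => Real.log (a^2+(ω+c)^2) - Real.log (a^2+(ω-c)^2)) atTop (𝓝 0) := by
  have hrat : Tendsto (fun ω : ℝ => 4*c*ω/(a^2+(ω-c)^2)) atTop (𝓝 0) := by
    have hdeg : (Polynomial.C (4*c) * Polynomial.X : Polynomial ℝ).degree
        < (Polynomial.C (a^2) + (Polynomial.X - Polynomial.C c)^2 : Polynomial ℝ).degree := by
      have h2 : (Polynomial.C (a^2) + (Polynomial.X - Polynomial.C c)^2 : Polynomial ℝ).degree = 2 := by
        compute_degree!
      have h1 : (Polynomial.C (4*c) * Polynomial.X : Polynomial ℝ).degree ≤ 1 := by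
        compute_degree
      rw [h2]; exact lt_of_le_of_lt h1 (by norm_num)
    have h := Polynomial.div_tendsto_zero_of_degree_lt _ _ hdeg
    refine h.congr fun ω => ?_
    simp [Polynomial.eval_pow]
  have hq : ∀ ω : ℝ, (0:ℝ) < a^2+(ω-c)^2 := fun ω => by positivity
  have hp : ∀ ω : ℝ, (0:ℝ) < a^2+(ω+c)^2 := fun ω => by positivity
  have hratio : Tendsto (fun ω : ℝ => (a^2+(ω+c)^2)/(a^2+(ω-c)^2)) atTop (𝓝 1) := by
    have := (tendsto_const_nhds (x := (1:ℝ)) (f := atTop)).add hrat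
    rw [add_zero] at this
    refine this.congr fun ω => ?_
    field_simp
    ring
  have hlog := ((Real.continuousAt_log one_ne_zero).tendsto.comp hratio)
  rw [Real.log_one] at hlog
  refine hlog.congr fun ω => ?_
  simp only [Function.comp_apply]
  rw [Real.log_div (hp ω).ne' (hq ω).ne']

lemma GG_top (a b x z : ℝ) (ha : 0 < a) :
    Tendsto (GG a b x z) atTop (𝓝 (x * π)) := by
  have t1 := (arctan_aff_top a b ha).const_mul x
  have t2 := (arctan_aff_top a (-b) ha).const_mul x
  have t3 := (log_part_top a b ha).const_mul (z/2)
  have H := (t1.add t2).add t3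
  have e : x * (π/2) + x * (π/2) + z/2 * 0 = x * π := by ring
  rw [e] at H
  refine H.congr fun ω => ?_
  unfold GG
  rw [show ω + -b = ω - b from (sub_eq_add_neg ω b).symm]

lemma GG_odd (a b x z : ℝ) (ω : ℝ) : GG a b x z (-ω) = - GG a b x z ω := by
  unfold GG
  have e1 : (-ω+b)/a = -((ω-b)/a) := by ring
  have e2 : (-ω-b)/a = -((ω+b)/a) := by ring
  have e3 : a^2+(-ω+b)^2 = a^2+(ω-b)^2 := by ring
  have e4 : a^2+(-ω-b)^2 = a^2+(ω+b)^2 := by ring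
  rw [e1, e2, e3, e4, Real.arctan_neg, Real.arctan_neg]
  ring

lemma GG_bot (a b x z : ℝ) (ha : 0 < a) :
    Tendsto (GG a b x z) atBot (𝓝 (-(x * π))) := by
  have H := ((GG_top a b x z ha).comp tendsto_neg_atBot_atTop).neg
  refine H.congr fun ω => ?_
  simp only [Function.comp_apply]
  rw [GG_odd, neg_neg]

lemma ff_integral (a b x z : ℝ) (ha : 0 < a) :
    ∫ ω : ℝ, ff a b x z ω = 2 * π * x := by
  rw [MeasureTheory.integral_of_hasDerivAt_of_tendsto (GG_deriv a b x z ha)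
    (ff_integrable a b x z ha) (GG_bot a b x z ha) (GG_top a b x z ha)]
  ring

theorem trace_Y_integrable_and_integral_eq_sum_trace
    {n : Type*} [Fintype n] (N : ℕ)
    (a b : Fin N → ℝ) (ha : ∀ i, 0 < a i)
    (X Z : Fin N → Matrix n n ℝ)
    (ΨY : ℝ → Matrix n n ℂ)
    (hΨY : ∀ ω : ℝ, ΨY ω = ∑ i : Fin N,
        ((Complex.I * ω + a i) ^ 2 + (b i : ℂ) ^ 2)⁻¹ •
          ((Complex.I * ω + a i) • (X i).map Complex.ofReal +
            (b i : ℂ) • (Z i).map Complex.ofReal))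
    (Y : ℝ → Matrix n n ℂ)
    (hY : ∀ ω : ℝ, Y ω = ΨY ω + (ΨY ω)ᴴ) :
    MeasureTheory.Integrable (fun ω : ℝ => ((Y ω).trace).re) ∧
      (1 / (2 * Real.pi)) * ∫ ω : ℝ, ((Y ω).trace).re = ∑ i : Fin N, (X i).trace := by
  have tr_map : ∀ (M : Matrix n n ℝ), (M.map Complex.ofReal).trace = ((M.trace : ℝ) : ℂ) := by
    intro M
    simp [Matrix.trace, Matrix.diag, Matrix.map_apply]
  have key : ∀ ω : ℝ, ((Y ω).trace).re
      = ∑ i : Fin N, ff (a i) (b i) ((X i).trace) ((Z i).trace) ω := by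
    intro ω
    have htr : (ΨY ω).trace = ∑ i : Fin N,
        ((Complex.I * ω + a i) ^ 2 + (b i : ℂ) ^ 2)⁻¹ *
          ((Complex.I * ω + a i) * ((X i).trace : ℂ) + (b i : ℂ) * ((Z i).trace : ℂ)) := by
      rw [hΨY ω, Matrix.trace_sum]
      refine Finset.sum_congr rfl fun i _ => ?_
      rw [Matrix.trace_smul, Matrix.trace_add, Matrix.trace_smul, Matrix.trace_smul,
        tr_map, tr_map, smul_eq_mul, smul_eq_mul, smul_eq_mul]
    rw [hY ω, Matrix.trace_add, Matrix.trace_conjTranspose, Complex.add_re,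
      show (star (ΨY ω).trace) = (starRingEnd ℂ) ((ΨY ω).trace) from rfl, Complex.conj_re,
      ← two_mul, htr, Complex.re_sum, Finset.mul_sum]
    exact Finset.sum_congr rfl fun i _ => rat_eq (a i) (b i) _ _ (ha i) ω
  have hfun : (fun ω : ℝ => ((Y ω).trace).re)
      = fun ω : ℝ => ∑ i : Fin N, ff (a i) (b i) ((X i).trace) ((Z i).trace) ω :=
    funext key
  constructor
  · rw [hfun]
    exact integrable_finset_sum _ fun i _ => ff_integrable _ _ _ _ (ha i)
  · rw [hfun, integral_finset_sum _ fun i _ => ff_integrable _ _ _ _ (ha i)]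
    have : ∀ i : Fin N, (∫ ω : ℝ, ff (a i) (b i) ((X i).trace) ((Z i).trace) ω)
        = 2 * π * (X i).trace := fun i => ff_integral _ _ _ _ (ha i)
    rw [Finset.sum_congr rfl fun i _ => this i, Finset.mul_sum]
    refine Finset.sum_congr rfl fun i _ => ?_
    field_simp
end

section
/- Let n be a finite index type and N a natural number. For i = 1,…,N let a_i > 0 and b_i be real numbers and X_i, Z_i real n×n matrices (viewed as complex matrices). Define Ψ_Y(iω) = Σ_{i=1}^{N} ((iω + a_i)·X_i + b_i·Z_i) / ((iω + a_i)² + b_i²) and Y(iω) = Ψ_Y(iω) + Ψ_Y(iω)ᴴ. Assume that Y(iω) is positive semidefinite for every real ω. Then there exists a function g : ℝ → ℝ that is antitone on [0, ∞) and Lebesgue integrable on [0, ∞), such that for every real ω the matrix g(|ω|)·I − Y(iω) is positive semidefinite. -/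
open Matrix ComplexOrder

section AuxLemmas

open Filter Topology

private lemma auxY_d_eq (a b ω : ℝ) :
    (Complex.I * ω + a) ^ 2 + (b:ℂ) ^ 2 =
      Complex.ofReal (a^2 + b^2 - ω^2) + Complex.ofReal (2*a*ω) * Complex.I := by
  push_cast
  linear_combination (ω:ℂ)^2 * Complex.I_sq

private lemma auxY_normSq_lb (a b ω : ℝ) :
    a^2*(a^2+b^2) ≤ Complex.normSq ((Complex.I * ω + a) ^ 2 + (b:ℂ) ^ 2) := by
  rw [auxY_d_eq, Complex.normSq_add_mul_I]
  rcases le_or_gt (b^2) (a^2) with h | h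
  · nlinarith [sq_nonneg (ω^2 + a^2 - b^2), sq_nonneg (a*b), sq_nonneg (b*b), sq_nonneg ω]
  · nlinarith [sq_nonneg (ω^2 + a^2 - b^2), sq_nonneg (a*b), sq_nonneg a, sq_nonneg ω]

private lemma auxY_d_ne (a b ω : ℝ) (ha : 0 < a) :
    (Complex.I * ω + a) ^ 2 + (b:ℂ) ^ 2 ≠ 0 := by
  intro h
  have h1 := auxY_normSq_lb a b ω
  rw [h] at h1
  simp at h1
  have h2 : 0 < a^2 := pow_pos ha 2
  nlinarith [sq_nonneg b]

private lemma auxY_norm_d_lb (a b ω : ℝ) :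
    Real.sqrt (a^2*(a^2+b^2)) ≤ ‖(Complex.I * ω + a) ^ 2 + (b:ℂ) ^ 2‖ := by
  rw [← Real.sqrt_sq (norm_nonneg _)]
  apply Real.sqrt_le_sqrt
  rw [Complex.sq_norm]
  exact auxY_normSq_lb a b ω

private lemma auxY_norm_d_lb2 (a b ω : ℝ) (h : 2*b^2 ≤ ω^2) :
    ω^2/2 ≤ ‖(Complex.I * ω + a) ^ 2 + (b:ℂ) ^ 2‖ := by
  have h1 : ‖(Complex.I * ω + a) ^ 2‖ = ω^2 + a^2 := by
    rw [norm_pow]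
    rw [show Complex.I * ω + a = Complex.ofReal a + Complex.ofReal ω * Complex.I by ring]
    rw [Complex.sq_norm, Complex.normSq_add_mul_I]
    ring
  have h2 : ‖((b:ℂ)) ^ 2‖ = b^2 := by
    rw [norm_pow, Complex.norm_real, Real.norm_eq_abs]; exact sq_abs b
  have tri := norm_sub_le ((Complex.I*ω+a)^2 + (b:ℂ)^2) ((b:ℂ)^2)
  have e : (Complex.I*ω+a)^2 + (b:ℂ)^2 - (b:ℂ)^2 = (Complex.I*ω+a)^2 := by ring
  rw [e, h1, h2] at tri
  linarith [sq_nonneg a]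

private lemma auxY_tendsto_inv_coe {l : Filter ℝ} (hl : Tendsto (fun ω : ℝ => ω⁻¹) l (𝓝 0)) :
    Tendsto (fun ω : ℝ => ((ω:ℂ))⁻¹) l (𝓝 0) := by
  have h := (Complex.continuous_ofReal.tendsto 0).comp hl
  simpa [Function.comp_def, Complex.ofReal_inv] using h

private lemma auxY_tendsto_g2 (a b : ℝ) {l : Filter ℝ}
    (hl : Tendsto (fun ω : ℝ => ((ω:ℂ))⁻¹) l (𝓝 0)) :
    Tendsto (fun ω : ℝ => -1 + ((a:ℂ)^2 + (b:ℂ)^2) * ((ω:ℂ)⁻¹)^2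
      + 2 * (a:ℂ) * Complex.I * ((ω:ℂ))⁻¹) l (𝓝 (-1)) := by
  have h1 : Tendsto (fun ω : ℝ => ((a:ℂ)^2 + (b:ℂ)^2) * ((ω:ℂ)⁻¹)^2) l (𝓝 0) := by
    have := ((hl.mul hl).const_mul ((a:ℂ)^2 + (b:ℂ)^2))
    simpa [pow_two] using this
  have h2 : Tendsto (fun ω : ℝ => 2 * (a:ℂ) * Complex.I * ((ω:ℂ))⁻¹) l (𝓝 0) := by
    simpa using hl.const_mul (2 * (a:ℂ) * Complex.I)
  have h3 := (h1.add h2).const_add (-1 : ℂ)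
  simp only [add_zero] at h3
  exact h3.congr (fun ω => by ring)

private lemma auxY_tendsto_phi (a b : ℝ) (ha : 0 < a) {l : Filter ℝ}
    (hl : Tendsto (fun ω : ℝ => ((ω:ℂ))⁻¹) l (𝓝 0))
    (hne : ∀ᶠ ω : ℝ in l, ω ≠ 0) :
    Tendsto (fun ω : ℝ => (ω:ℂ) * ((Complex.I * ω + a) / ((Complex.I * ω + a) ^ 2 + (b:ℂ) ^ 2)))
      l (𝓝 (-Complex.I)) := by
  have h1 : Tendsto (fun ω : ℝ => Complex.I + (a:ℂ) * ((ω:ℂ))⁻¹) l (𝓝 Complex.I) := by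
    have := (hl.const_mul ((a:ℂ))).const_add Complex.I
    simpa using this
  have h2 := auxY_tendsto_g2 a b hl
  have h3 := h1.div h2 (by norm_num)
  have h4 : Complex.I / (-1 : ℂ) = -Complex.I := by rw [div_neg, div_one]
  rw [h4] at h3
  apply h3.congr'
  filter_upwards [hne] with ω hω
  simp only [Pi.div_apply]
  have hd := auxY_d_ne a b ω ha
  have hωc : ((ω:ℂ)) ≠ 0 := Complex.ofReal_ne_zero.mpr hω
  have hg2 : (-1 + ((a:ℂ)^2 + (b:ℂ)^2) * ((ω:ℂ)⁻¹)^2 + 2*(a:ℂ)*Complex.I*(ω:ℂ)⁻¹)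
      = ((Complex.I*ω+a)^2 + (b:ℂ)^2) * ((ω:ℂ)⁻¹)^2 := by
    field_simp
    linear_combination (-(ω:ℂ)^2) * Complex.I_sq
  have hnum : (Complex.I + (a:ℂ) * (ω:ℂ)⁻¹) = ((ω:ℂ) * (Complex.I*ω + a)) * ((ω:ℂ)⁻¹)^2 := by
    field_simp
  rw [hnum, hg2, mul_div_mul_right _ _ (pow_ne_zero 2 (inv_ne_zero hωc)), mul_div_assoc]

private lemma auxY_tendsto_psi (a b : ℝ) (ha : 0 < a) {l : Filter ℝ}
    (hl : Tendsto (fun ω : ℝ => ((ω:ℂ))⁻¹) l (𝓝 0))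
    (hne : ∀ᶠ ω : ℝ in l, ω ≠ 0) :
    Tendsto (fun ω : ℝ => (ω:ℂ) * ((b:ℂ) / ((Complex.I * ω + a) ^ 2 + (b:ℂ) ^ 2)))
      l (𝓝 0) := by
  have h1 : Tendsto (fun ω : ℝ => (b:ℂ) * ((ω:ℂ))⁻¹) l (𝓝 0) := by
    simpa using hl.const_mul ((b:ℂ))
  have h2 := auxY_tendsto_g2 a b hl
  have h3 := h1.div h2 (by norm_num)
  rw [show (0:ℂ) / (-1:ℂ) = 0 by norm_num] at h3
  apply h3.congr'
  filter_upwards [hne] with ω hω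
  simp only [Pi.div_apply]
  have hd := auxY_d_ne a b ω ha
  have hωc : ((ω:ℂ)) ≠ 0 := Complex.ofReal_ne_zero.mpr hω
  have hg2 : (-1 + ((a:ℂ)^2 + (b:ℂ)^2) * ((ω:ℂ)⁻¹)^2 + 2*(a:ℂ)*Complex.I*(ω:ℂ)⁻¹)
      = ((Complex.I*ω+a)^2 + (b:ℂ)^2) * ((ω:ℂ)⁻¹)^2 := by
    field_simp
    linear_combination (-(ω:ℂ)^2) * Complex.I_sq
  have hnum : ((b:ℂ) * (ω:ℂ)⁻¹) = ((ω:ℂ) * (b:ℂ)) * ((ω:ℂ)⁻¹)^2 := by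
    field_simp
  rw [hnum, hg2, mul_div_mul_right _ _ (pow_ne_zero 2 (inv_ne_zero hωc)), mul_div_assoc]

private lemma auxY_quad_zero {n : Type*} [Fintype n] [DecidableEq n] (L : Matrix n n ℂ)
    (h : ∀ v : n → ℂ, star v ⬝ᵥ L *ᵥ v = 0) : L = 0 := by
  have key : ∀ x y : n → ℂ, star x ⬝ᵥ L *ᵥ y = 0 := by
    intro x y
    have h1 := h (x + y)
    have h2 := h (x + Complex.I • y)
    have hx := h x
    have hy := h y
    rw [star_add, mulVec_add, add_dotProduct, dotProduct_add, dotProduct_add] at h1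
    rw [hx] at h1
    rw [star_add, star_smul, mulVec_add, mulVec_smul, add_dotProduct, dotProduct_add,
      dotProduct_add, smul_dotProduct, dotProduct_smul, smul_dotProduct, dotProduct_smul,
      hx] at h2
    have hsy : star Complex.I = -Complex.I := Complex.star_def ▸ by simp
    rw [hsy] at h2
    simp only [smul_eq_mul] at h2
    have e1 : star x ⬝ᵥ L *ᵥ y + star y ⬝ᵥ L *ᵥ x = 0 := by linear_combination h1 - hy
    have e3 : star x ⬝ᵥ L *ᵥ y - star y ⬝ᵥ L *ᵥ x = 0 := by
      linear_combination (-Complex.I) * h2 +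
        (star x ⬝ᵥ L *ᵥ y - star y ⬝ᵥ L *ᵥ x) * Complex.I_sq + (-Complex.I^3) * hy
    linear_combination (e1 + e3) / 2
  ext j k
  have hthis := key (Pi.single j 1) (Pi.single k 1)
  have hstar : star (Pi.single j 1 : n → ℂ) = Pi.single j 1 := by
    funext i
    simp [Pi.single_apply, apply_ite]
  rw [hstar, Matrix.mulVec_single, single_dotProduct] at hthis
  simpa using hthis

private lemma auxY_quad_bound {n : Type*} [Fintype n] (M : Matrix n n ℂ) (m : ℝ)
    (hM : ∀ j k, ‖M j k‖ ≤ m) (v : n → ℂ) :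
    ‖star v ⬝ᵥ M *ᵥ v‖ ≤ m * (Fintype.card n) * ∑ j, ‖v j‖^2 := by
  rcases isEmpty_or_nonempty n with hn | hn
  · simp [dotProduct]
  have hm0 : 0 ≤ m := le_trans (norm_nonneg _) (hM hn.some hn.some)
  have hMv : ∀ j, ‖(M *ᵥ v) j‖ ≤ m * ∑ k, ‖v k‖ := by
    intro j
    rw [mulVec, dotProduct, Finset.mul_sum]
    refine le_trans (norm_sum_le _ _) (Finset.sum_le_sum fun k _ => ?_)
    rw [norm_mul]
    exact mul_le_mul_of_nonneg_right (hM j k) (norm_nonneg _)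
  have step1 : ‖star v ⬝ᵥ M *ᵥ v‖ ≤ m * ((∑ j, ‖v j‖) * (∑ k, ‖v k‖)) := by
    rw [dotProduct]
    refine le_trans (norm_sum_le _ _) ?_
    rw [show m * ((∑ j, ‖v j‖) * ∑ k, ‖v k‖) = ∑ j, ‖v j‖ * (m * ∑ k, ‖v k‖) by
      rw [Finset.sum_mul]
      rw [Finset.mul_sum]
      exact Finset.sum_congr rfl fun j _ => by ring]
    refine Finset.sum_le_sum fun j _ => ?_
    rw [norm_mul, Pi.star_apply, norm_star]
    exact mul_le_mul_of_nonneg_left (hMv j) (norm_nonneg _)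
  have step2 : (∑ j, ‖v j‖) * (∑ k, ‖v k‖) ≤ (Fintype.card n) * ∑ j, ‖v j‖^2 := by
    have := sq_sum_le_card_mul_sum_sq (s := (Finset.univ : Finset n)) (f := fun j => ‖v j‖)
    rw [sq] at this
    simpa [Finset.card_univ] using this
  calc ‖star v ⬝ᵥ M *ᵥ v‖ ≤ m * ((∑ j, ‖v j‖) * (∑ k, ‖v k‖)) := step1
    _ ≤ m * ((Fintype.card n) * ∑ j, ‖v j‖^2) := mul_le_mul_of_nonneg_left step2 hm0
    _ = m * (Fintype.card n) * ∑ j, ‖v j‖^2 := by ring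

private lemma auxY_phi_split (a b ω : ℝ) (ha : 0 < a) (hω : ω ≠ 0) :
    (Complex.I * ω + a) / ((Complex.I * ω + a)^2 + (b:ℂ)^2)
      = (Complex.I * ω)⁻¹ + (-((a:ℂ)*(Complex.I*ω) + (a:ℂ)^2 + (b:ℂ)^2))
          / ((Complex.I*ω) * ((Complex.I*ω + a)^2 + (b:ℂ)^2)) := by
  have hd := auxY_d_ne a b ω ha
  have hωc : ((ω:ℂ)) ≠ 0 := Complex.ofReal_ne_zero.mpr hω
  have hIω : Complex.I * (ω:ℂ) ≠ 0 := mul_ne_zero Complex.I_ne_zero hωc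
  field_simp
  ring

private lemma auxY_rho_bound (a b ω : ℝ) (ha : 0 < a) (h1 : 1 ≤ |ω|) (h2 : 2*b^2 ≤ ω^2) :
    ‖(-((a:ℂ)*(Complex.I*ω) + (a:ℂ)^2 + (b:ℂ)^2))
        / ((Complex.I*ω) * ((Complex.I*ω + a)^2 + (b:ℂ)^2))‖ ≤ 2*(a + a^2 + b^2)/ω^2 := by
  have hω0 : (0:ℝ) < |ω| := lt_of_lt_of_le one_pos h1
  have hωne : ω ≠ 0 := fun h => by rw [h] at hω0; simp at hω0
  have hnum : ‖(-((a:ℂ)*(Complex.I*ω) + (a:ℂ)^2 + (b:ℂ)^2))‖ ≤ |ω| * (a + a^2 + b^2) := by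
    rw [norm_neg]
    refine le_trans (norm_add_le _ _) (le_trans (add_le_add_left (norm_add_le _ _) _) ?_)
    have e1 : ‖(a:ℂ)*(Complex.I*(ω:ℂ))‖ = a * |ω| := by
      rw [norm_mul, norm_mul, Complex.norm_I, one_mul, Complex.norm_real, Complex.norm_real,
        Real.norm_eq_abs, Real.norm_eq_abs, abs_of_pos ha]
    have e2 : ‖((a:ℂ))^2‖ = a^2 := by
      rw [norm_pow, Complex.norm_real, Real.norm_eq_abs]; exact sq_abs a
    have e3 : ‖((b:ℂ))^2‖ = b^2 := by
      rw [norm_pow, Complex.norm_real, Real.norm_eq_abs]; exact sq_abs b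
    rw [e1, e2, e3]
    nlinarith [sq_nonneg a, sq_nonneg b, ha.le]
  have hden : |ω| * (ω^2/2) ≤ ‖(Complex.I*(ω:ℂ)) * ((Complex.I*ω + a)^2 + (b:ℂ)^2)‖ := by
    rw [norm_mul, norm_mul, Complex.norm_I, one_mul, Complex.norm_real, Real.norm_eq_abs]
    exact mul_le_mul_of_nonneg_left (auxY_norm_d_lb2 a b ω h2) (abs_nonneg ω)
  rw [norm_div]
  calc ‖(-((a:ℂ)*(Complex.I*ω) + (a:ℂ)^2 + (b:ℂ)^2))‖
        / ‖(Complex.I*(ω:ℂ)) * ((Complex.I*ω + a)^2 + (b:ℂ)^2)‖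
      ≤ (|ω| * (a + a^2 + b^2)) / (|ω| * (ω^2/2)) := by
        apply div_le_div₀ (by positivity) hnum (by positivity) hden
    _ = 2*(a + a^2 + b^2)/ω^2 := by
        rw [show |ω| * (a + a^2 + b^2) = (a + a^2 + b^2) * |ω| by ring,
          show |ω| * (ω^2/2) = (ω^2/2) * |ω| by ring,
          mul_div_mul_right _ _ (ne_of_gt hω0)]
        have hω2 : ω^2 ≠ 0 := pow_ne_zero 2 hωne
        field_simp
  
private lemma auxY_psi_bound (a b ω : ℝ) (h1 : 1 ≤ |ω|) (h2 : 2*b^2 ≤ ω^2) :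
    ‖(b:ℂ) / ((Complex.I*ω + a)^2 + (b:ℂ)^2)‖ ≤ 2*|b|/ω^2 := by
  have hω0 : (0:ℝ) < |ω| := lt_of_lt_of_le one_pos h1
  have hωne : ω ≠ 0 := fun h => by rw [h] at hω0; simp at hω0
  rw [norm_div, Complex.norm_real, Real.norm_eq_abs]
  calc |b| / ‖(Complex.I*ω + a)^2 + (b:ℂ)^2‖ ≤ |b| / (ω^2/2) := by
        apply div_le_div₀ (abs_nonneg b) le_rfl (by positivity) (auxY_norm_d_lb2 a b ω h2)
    _ = 2*|b|/ω^2 := by field_simp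

end AuxLemmas

theorem Y_bounded_by_integrable_antitone_envelope
    {n : Type*} [Fintype n] [DecidableEq n] (N : ℕ)
    (a b : Fin N → ℝ) (ha : ∀ i, 0 < a i)
    (X Z : Fin N → Matrix n n ℝ)
    (ΨY : ℝ → Matrix n n ℂ)
    (hΨY : ∀ ω : ℝ, ΨY ω = ∑ i : Fin N,
        ((Complex.I * ω + a i) ^ 2 + (b i : ℂ) ^ 2)⁻¹ •
          ((Complex.I * ω + a i) • (X i).map Complex.ofReal +
            (b i : ℂ) • (Z i).map Complex.ofReal))
    (Y : ℝ → Matrix n n ℂ)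
    (hY : ∀ ω : ℝ, Y ω = ΨY ω + (ΨY ω)ᴴ)
    (hpsd : ∀ ω : ℝ, (Y ω).PosSemidef) :
    ∃ g : ℝ → ℝ, AntitoneOn g (Set.Ici 0) ∧
      MeasureTheory.IntegrableOn g (Set.Ici 0) ∧
      ∀ ω : ℝ, (((g |ω| : ℝ) : ℂ) • (1 : Matrix n n ℂ) - Y ω).PosSemidef := by
  classical
  have hent : ∀ (ω : ℝ) (j k : n), ΨY ω j k =
      ∑ i : Fin N, ((Complex.I * ω + a i) / ((Complex.I * ω + a i)^2 + (b i:ℂ)^2) * (X i j k : ℂ)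
        + (b i : ℂ) / ((Complex.I * ω + a i)^2 + (b i:ℂ)^2) * (Z i j k : ℂ)) := by
    intro ω j k
    rw [hΨY ω, Matrix.sum_apply]
    refine Finset.sum_congr rfl fun i _ => ?_
    simp only [Matrix.smul_apply, Matrix.add_apply, Matrix.map_apply, smul_eq_mul]
    ring
  have hYent : ∀ (ω : ℝ) (j k : n), Y ω j k = ΨY ω j k + (starRingEnd ℂ) (ΨY ω k j) := by
    intro ω j k
    rw [hY ω]
    simp [Matrix.add_apply, Matrix.conjTranspose_apply, Complex.star_def]
  -- Part 1: symmetry of ∑ X i from positivity at infinity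
  have hsym : ∀ j k : n, (∑ i, X i j k) = ∑ i, X i k j := by
    have hΨtend : ∀ (l : Filter ℝ), Filter.Tendsto (fun ω : ℝ => ((ω:ℂ))⁻¹) l (nhds 0) →
        (∀ᶠ ω : ℝ in l, ω ≠ 0) → ∀ j k : n,
        Filter.Tendsto (fun ω : ℝ => (ω:ℂ) * ΨY ω j k) l
          (nhds (-Complex.I * ∑ i, (X i j k : ℂ))) := by
      intro l hl hne j k
      have h := tendsto_finset_sum (Finset.univ : Finset (Fin N)) (fun i _ =>
        ((auxY_tendsto_phi (a i) (b i) (ha i) hl hne).mul_const ((X i j k : ℂ))).add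
        ((auxY_tendsto_psi (a i) (b i) (ha i) hl hne).mul_const ((Z i j k : ℂ))))
      have hlim : (∑ i, (-Complex.I * (X i j k : ℂ) + 0 * (Z i j k : ℂ)))
          = -Complex.I * ∑ i, (X i j k : ℂ) := by
        rw [Finset.mul_sum]; exact Finset.sum_congr rfl fun i _ => by ring
      rw [hlim] at h
      apply h.congr
      intro ω
      rw [hent ω j k, Finset.mul_sum]
      exact Finset.sum_congr rfl fun i _ => by ring
    set Lm : Matrix n n ℂ := Matrix.of fun j k =>
      -Complex.I * (∑ i, (X i j k : ℂ)) + (starRingEnd ℂ) (-Complex.I * ∑ i, (X i k j : ℂ))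
      with hLm
    have hYtend : ∀ (l : Filter ℝ), Filter.Tendsto (fun ω : ℝ => ((ω:ℂ))⁻¹) l (nhds 0) →
        (∀ᶠ ω : ℝ in l, ω ≠ 0) → ∀ j k : n,
        Filter.Tendsto (fun ω : ℝ => (ω:ℂ) * Y ω j k) l (nhds (Lm j k)) := by
      intro l hl hne j k
      have h1 := hΨtend l hl hne j k
      have h2 := (Complex.continuous_conj.tendsto _).comp (hΨtend l hl hne k j)
      have h := h1.add h2
      apply h.congr
      intro ω
      simp only [Function.comp]
      rw [hYent ω j k, mul_add]
      congr 1
      rw [_root_.map_mul, Complex.conj_ofReal]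
    have hinvTop : Filter.Tendsto (fun ω : ℝ => ((ω:ℂ))⁻¹) Filter.atTop (nhds 0) :=
      auxY_tendsto_inv_coe tendsto_inv_atTop_zero
    have hinvBot : Filter.Tendsto (fun ω : ℝ => ((ω:ℂ))⁻¹) Filter.atBot (nhds 0) := by
      apply auxY_tendsto_inv_coe
      have h := tendsto_inv_atTop_zero.comp (Filter.tendsto_neg_atBot_atTop (G := ℝ))
      have h2 := h.neg
      rw [neg_zero] at h2
      apply h2.congr
      intro ω
      simp [Function.comp, inv_neg]
    have hLzero : Lm = 0 := by
      apply auxY_quad_zero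
      intro v
      have hQ : ∀ (l : Filter ℝ), Filter.Tendsto (fun ω : ℝ => ((ω:ℂ))⁻¹) l (nhds 0) →
          (∀ᶠ ω : ℝ in l, ω ≠ 0) →
          Filter.Tendsto (fun ω : ℝ => (ω:ℂ) * (star v ⬝ᵥ Y ω *ᵥ v)) l
            (nhds (star v ⬝ᵥ Lm *ᵥ v)) := by
        intro l hl hne
        have h := tendsto_finset_sum (Finset.univ : Finset n) (fun j _ =>
          (tendsto_finset_sum (Finset.univ : Finset n) (fun k _ =>
            ((hYtend l hl hne j k).mul_const (v k)))).const_mul (star (v j)))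
        have hlim : (∑ j, star (v j) * ∑ k, Lm j k * v k) = star v ⬝ᵥ Lm *ᵥ v := rfl
        rw [hlim] at h
        apply h.congr
        intro ω
        simp only [dotProduct, Matrix.mulVec, Pi.star_apply, Finset.mul_sum]
        refine Finset.sum_congr rfl fun j _ => Finset.sum_congr rfl fun k _ => by ring
      have hQT := hQ Filter.atTop hinvTop (Filter.eventually_ne_atTop 0)
      have hQB := hQ Filter.atBot hinvBot (Filter.eventually_ne_atBot 0)
      set q : ℝ → ℂ := fun ω => star v ⬝ᵥ Y ω *ᵥ v with hqdef
      have hqim : ∀ ω, (q ω).im = 0 := fun ω =>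
        ((Complex.le_def.mp ((hpsd ω).dotProduct_mulVec_nonneg v)).2).symm
      have hqre : ∀ ω, 0 ≤ (q ω).re := fun ω => by
        simpa using (Complex.le_def.mp ((hpsd ω).dotProduct_mulVec_nonneg v)).1
      set Lq : ℂ := star v ⬝ᵥ Lm *ᵥ v with hLq
      have hreT : Filter.Tendsto (fun ω : ℝ => ω * (q ω).re) Filter.atTop (nhds Lq.re) := by
        have h := (Complex.continuous_re.tendsto _).comp hQT
        apply h.congr
        intro ω
        simp [Function.comp, hqdef]
      have hreB : Filter.Tendsto (fun ω : ℝ => ω * (q ω).re) Filter.atBot (nhds Lq.re) := by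
        have h := (Complex.continuous_re.tendsto _).comp hQB
        apply h.congr
        intro ω
        simp [Function.comp, hqdef]
      have h1 : 0 ≤ Lq.re := by
        refine ge_of_tendsto hreT ?_
        filter_upwards [Filter.eventually_ge_atTop (0:ℝ)] with ω hω
        exact mul_nonneg hω (hqre ω)
      have h2 : Lq.re ≤ 0 := by
        refine le_of_tendsto hreB ?_
        filter_upwards [Filter.eventually_le_atBot (0:ℝ)] with ω hω
        exact mul_nonpos_iff.mpr (Or.inr ⟨hω, hqre ω⟩)
      have h3 : Lq.im = 0 := by
        have h := (Complex.continuous_im.tendsto _).comp hQT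
        have hconst : Filter.Tendsto (fun ω : ℝ => ((ω:ℂ) * q ω).im) Filter.atTop (nhds 0) := by
          apply Filter.Tendsto.congr _ tendsto_const_nhds
          intro ω
          simp [hqim ω]
        exact tendsto_nhds_unique h hconst
      have : Lq = 0 := Complex.ext (le_antisymm h2 h1) h3
      exact this
    intro j k
    have hjk : Lm j k = 0 := by rw [hLzero]; rfl
    rw [hLm] at hjk
    simp only [Matrix.of_apply] at hjk
    have hc1 : (∑ i, (X i j k : ℂ)) = ((∑ i, X i j k : ℝ) : ℂ) := by push_cast; rfl
    have hc2 : (∑ i, (X i k j : ℂ)) = ((∑ i, X i k j : ℝ) : ℂ) := by push_cast; rfl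
    rw [hc1, hc2] at hjk
    simp only [_root_.map_mul, map_neg, Complex.conj_I, Complex.conj_ofReal] at hjk
    have : ((∑ i, X i j k : ℝ) : ℂ) = ((∑ i, X i k j : ℝ) : ℂ) := by
      linear_combination Complex.I * hjk +
        (((∑ i, X i j k : ℝ) : ℂ) - ((∑ i, X i k j : ℝ) : ℂ)) * Complex.I_sq
    exact_mod_cast this
  -- Part 2: constants and bounds
  set MX : Fin N → ℝ := fun i => ∑ j, ∑ k, |X i j k| with hMXdef
  set MZ : Fin N → ℝ := fun i => ∑ j, ∑ k, |Z i j k| with hMZdef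
  have hMXb : ∀ i (j k : n), |X i j k| ≤ MX i := by
    intro i j k
    calc |X i j k| ≤ ∑ k', |X i j k'| :=
          Finset.single_le_sum (f := fun k' => |X i j k'|) (fun _ _ => abs_nonneg _)
            (Finset.mem_univ k)
      _ ≤ MX i := Finset.single_le_sum (f := fun j' => ∑ k', |X i j' k'|)
          (fun _ _ => Finset.sum_nonneg fun _ _ => abs_nonneg _) (Finset.mem_univ j)
  have hMZb : ∀ i (j k : n), |Z i j k| ≤ MZ i := by
    intro i j k
    calc |Z i j k| ≤ ∑ k', |Z i j k'| :=
          Finset.single_le_sum (f := fun k' => |Z i j k'|) (fun _ _ => abs_nonneg _)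
            (Finset.mem_univ k)
      _ ≤ MZ i := Finset.single_le_sum (f := fun j' => ∑ k', |Z i j' k'|)
          (fun _ _ => Finset.sum_nonneg fun _ _ => abs_nonneg _) (Finset.mem_univ j)
  have hMX0 : ∀ i, 0 ≤ MX i := fun i =>
    Finset.sum_nonneg fun _ _ => Finset.sum_nonneg fun _ _ => abs_nonneg _
  have hMZ0 : ∀ i, 0 ≤ MZ i := fun i =>
    Finset.sum_nonneg fun _ _ => Finset.sum_nonneg fun _ _ => abs_nonneg _
  set δ : Fin N → ℝ := fun i => Real.sqrt ((a i)^2 * ((a i)^2 + (b i)^2)) with hδdef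
  have hδ : ∀ i, 0 < δ i := fun i => Real.sqrt_pos.mpr
    (by nlinarith [pow_pos (ha i) 2, sq_nonneg (b i)])
  set Tb : ℝ := 1 + ∑ i, Real.sqrt 2 * |b i| with hTbdef
  have hTb1 : 1 ≤ Tb := by
    have h : 0 ≤ ∑ i, Real.sqrt 2 * |b i| := Finset.sum_nonneg fun _ _ => by positivity
    rw [hTbdef]; linarith
  have hTb0 : 0 < Tb := lt_of_lt_of_le one_pos hTb1
  have hTb2 : ∀ i, 2 * (b i)^2 ≤ Tb^2 := by
    intro i
    have h1 : Real.sqrt 2 * |b i| ≤ Tb := by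
      have h : Real.sqrt 2 * |b i| ≤ ∑ i', Real.sqrt 2 * |b i'| :=
        Finset.single_le_sum (f := fun i' => Real.sqrt 2 * |b i'|)
          (fun _ _ => by positivity) (Finset.mem_univ i)
      rw [hTbdef]; linarith
    have h0 : 0 ≤ Real.sqrt 2 * |b i| := by positivity
    have e : (Real.sqrt 2 * |b i|)^2 = 2 * (b i)^2 := by
      rw [mul_pow, Real.sq_sqrt (by norm_num : (0:ℝ) ≤ 2), sq_abs]
    nlinarith [mul_self_le_mul_self h0 h1]
  set C1 : ℝ := 2 * ∑ i, ((Tb + a i) / δ i * MX i + |b i| / δ i * MZ i) with hC1def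
  set C2 : ℝ := 2 * ∑ i, (2*(a i + (a i)^2 + (b i)^2) * MX i + 2*|b i| * MZ i) with hC2def
  have hC10 : 0 ≤ C1 := by
    rw [hC1def]
    apply mul_nonneg (by norm_num)
    apply Finset.sum_nonneg; intro i _
    have h1 : 0 ≤ Tb + a i := by linarith [(ha i)]
    have h2 := mul_nonneg (div_nonneg h1 (hδ i).le) (hMX0 i)
    have h3 := mul_nonneg (div_nonneg (abs_nonneg (b i)) (hδ i).le) (hMZ0 i)
    linarith
  have hC20 : 0 ≤ C2 := by
    rw [hC2def]
    apply mul_nonneg (by norm_num)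
    apply Finset.sum_nonneg; intro i _
    have h1 : 0 ≤ a i + (a i)^2 + (b i)^2 := by nlinarith [(ha i).le, sq_nonneg (a i), sq_nonneg (b i)]
    have h2 := mul_nonneg (mul_nonneg (by norm_num : (0:ℝ) ≤ 2) h1) (hMX0 i)
    have h3 := mul_nonneg (mul_nonneg (by norm_num : (0:ℝ) ≤ 2) (abs_nonneg (b i))) (hMZ0 i)
    linarith
  have hsmall : ∀ ω : ℝ, |ω| ≤ Tb → ∀ j k : n, ‖Y ω j k‖ ≤ C1 := by
    intro ω hω
    have hhalf : ∀ j k : n, ‖ΨY ω j k‖ ≤ ∑ i, ((Tb + a i)/δ i * MX i + |b i|/δ i * MZ i) := by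
      intro j k
      rw [hent]
      refine le_trans (norm_sum_le _ _) (Finset.sum_le_sum fun i _ => ?_)
      have hdlb : δ i ≤ ‖(Complex.I * ω + a i)^2 + (b i:ℂ)^2‖ := auxY_norm_d_lb (a i) (b i) ω
      refine le_trans (norm_add_le _ _) (add_le_add ?_ ?_)
      · rw [norm_mul, norm_div]
        have hu : ‖Complex.I * (ω:ℂ) + ((a i : ℝ):ℂ)‖ ≤ Tb + a i := by
          refine le_trans (norm_add_le _ _) ?_
          rw [norm_mul, Complex.norm_I, one_mul, Complex.norm_real, Complex.norm_real,
            Real.norm_eq_abs, Real.norm_eq_abs, abs_of_pos (ha i)]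
          linarith
        have hx : ‖((X i j k : ℝ) : ℂ)‖ ≤ MX i := by
          rw [Complex.norm_real, Real.norm_eq_abs]; exact hMXb i j k
        have hTa : 0 ≤ Tb + a i := by linarith [(ha i)]
        exact mul_le_mul (div_le_div₀ hTa hu (hδ i) hdlb) hx (norm_nonneg _)
          (div_nonneg hTa (hδ i).le)
      · rw [norm_mul, norm_div]
        have hb' : ‖((b i : ℝ):ℂ)‖ = |b i| := by rw [Complex.norm_real, Real.norm_eq_abs]
        have hz : ‖((Z i j k : ℝ) : ℂ)‖ ≤ MZ i := by
          rw [Complex.norm_real, Real.norm_eq_abs]; exact hMZb i j k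
        rw [hb']
        exact mul_le_mul (div_le_div₀ (abs_nonneg _) le_rfl (hδ i) hdlb) hz (norm_nonneg _)
          (div_nonneg (abs_nonneg _) (hδ i).le)
    intro j k
    rw [hYent]
    refine le_trans (norm_add_le _ _) ?_
    rw [RCLike.norm_conj]
    have h1 := hhalf j k
    have h2 := hhalf k j
    rw [hC1def]
    linarith
  have hlarge : ∀ ω : ℝ, Tb ≤ |ω| → ∀ j k : n, ‖Y ω j k‖ ≤ C2 / ω^2 := by
    intro ω hω
    have hω1 : 1 ≤ |ω| := le_trans hTb1 hω
    have hωne : ω ≠ 0 := by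
      intro h; rw [h] at hω1; simp at hω1; linarith
    have hωsq : Tb^2 ≤ ω^2 := by
      rw [← sq_abs ω]; exact pow_le_pow_left₀ hTb0.le hω 2
    have hb2 : ∀ i, 2 * (b i)^2 ≤ ω^2 := fun i => le_trans (hTb2 i) hωsq
    set E : n → n → ℂ := fun j k => ∑ i,
      ((-(((a i : ℝ):ℂ)*(Complex.I*ω) + ((a i : ℝ):ℂ)^2 + ((b i : ℝ):ℂ)^2))
          / ((Complex.I*ω) * ((Complex.I*ω + a i)^2 + (b i:ℂ)^2)) * (X i j k : ℂ)
        + ((b i : ℝ) : ℂ)/((Complex.I*ω + a i)^2 + (b i:ℂ)^2) * (Z i j k : ℂ)) with hEdef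
    have hΨsplit : ∀ j k : n, ΨY ω j k
        = (Complex.I*ω)⁻¹ * (∑ i, (X i j k : ℂ)) + E j k := by
      intro j k
      rw [hent]
      have hterm : ∀ i : Fin N,
          (Complex.I * ω + a i) / ((Complex.I * ω + a i)^2 + (b i:ℂ)^2) * (X i j k : ℂ)
          + ((b i : ℝ) : ℂ) / ((Complex.I * ω + a i)^2 + (b i:ℂ)^2) * (Z i j k : ℂ)
          = (Complex.I*(ω:ℂ))⁻¹ * (X i j k : ℂ)
            + ((-(((a i : ℝ):ℂ)*(Complex.I*ω) + ((a i : ℝ):ℂ)^2 + ((b i : ℝ):ℂ)^2))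
              / ((Complex.I*ω) * ((Complex.I*ω + a i)^2 + (b i:ℂ)^2)) * (X i j k : ℂ)
              + ((b i : ℝ) : ℂ)/((Complex.I*ω + a i)^2 + (b i:ℂ)^2) * (Z i j k : ℂ)) := by
        intro i
        rw [auxY_phi_split (a i) (b i) ω (ha i) hωne]
        ring
      rw [Finset.sum_congr rfl (fun i _ => hterm i), Finset.sum_add_distrib, ← Finset.mul_sum,
        hEdef]
    have hYsplit : ∀ j k : n, Y ω j k = E j k + (starRingEnd ℂ) (E k j) := by
      intro j k
      rw [hYent, hΨsplit j k, hΨsplit k j]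
      rw [_root_.map_add, _root_.map_mul]
      have hconj_inv : (starRingEnd ℂ) ((Complex.I*(ω:ℂ))⁻¹) = -(Complex.I*(ω:ℂ))⁻¹ := by
        rw [map_inv₀, _root_.map_mul, Complex.conj_I, Complex.conj_ofReal, neg_mul, inv_neg]
      have hcast1 : (∑ i, (X i j k : ℂ)) = ((∑ i, X i j k : ℝ) : ℂ) := by push_cast; rfl
      have hcast2 : (∑ i, (X i k j : ℂ)) = ((∑ i, X i k j : ℝ) : ℂ) := by push_cast; rfl
      rw [hconj_inv, hcast1, hcast2, Complex.conj_ofReal, hsym j k]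
      ring
    have hEb : ∀ j k : n, ‖E j k‖
        ≤ (∑ i, (2*(a i + (a i)^2 + (b i)^2) * MX i + 2*|b i| * MZ i)) / ω^2 := by
      intro j k
      rw [hEdef, Finset.sum_div]
      refine le_trans (norm_sum_le _ _) (Finset.sum_le_sum fun i _ => ?_)
      refine le_trans (norm_add_le _ _) ?_
      rw [add_div]
      have hx : ‖((X i j k : ℝ):ℂ)‖ ≤ MX i := by
        rw [Complex.norm_real, Real.norm_eq_abs]; exact hMXb i j k
      have hz : ‖((Z i j k : ℝ):ℂ)‖ ≤ MZ i := by
        rw [Complex.norm_real, Real.norm_eq_abs]; exact hMZb i j k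
      refine add_le_add ?_ ?_
      · rw [norm_mul]
        have h1 := auxY_rho_bound (a i) (b i) ω (ha i) hω1 (hb2 i)
        have hnn : 0 ≤ 2*(a i + (a i)^2 + (b i)^2)/ω^2 := by
          apply div_nonneg _ (sq_nonneg ω)
          nlinarith [(ha i).le, sq_nonneg (a i), sq_nonneg (b i)]
        refine le_trans (mul_le_mul h1 hx (norm_nonneg _) hnn) (le_of_eq ?_)
        ring
      · rw [norm_mul]
        have h1 := auxY_psi_bound (a i) (b i) ω hω1 (hb2 i)
        have hnn : 0 ≤ 2*|b i|/ω^2 := by positivity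
        refine le_trans (mul_le_mul h1 hz (norm_nonneg _) hnn) (le_of_eq ?_)
        ring
    intro j k
    rw [hYsplit j k]
    refine le_trans (norm_add_le _ _) ?_
    rw [RCLike.norm_conj]
    have h1 := hEb j k
    have h2 := hEb k j
    rw [hC2def]
    have he : (2 * ∑ i, (2*(a i + (a i)^2 + (b i)^2) * MX i + 2*|b i| * MZ i)) / ω^2
        = (∑ i, (2*(a i + (a i)^2 + (b i)^2) * MX i + 2*|b i| * MZ i)) / ω^2
          + (∑ i, (2*(a i + (a i)^2 + (b i)^2) * MX i + 2*|b i| * MZ i)) / ω^2 := by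
      ring
    rw [he]
    exact add_le_add h1 h2
  set C : ℝ := C1*(1+Tb^2) + 2*C2 with hCdef
  have hC0 : 0 ≤ C := by rw [hCdef]; nlinarith [hC10, hC20, sq_nonneg Tb]
  have hC : ∀ (ω : ℝ) (j k : n), ‖Y ω j k‖ ≤ C / (1 + ω^2) := by
    intro ω j k
    have h1ω : (0:ℝ) < 1 + ω^2 := by positivity
    rw [le_div_iff₀ h1ω, hCdef]
    rcases le_total |ω| Tb with h | h
    · have hb := hsmall ω h j k
      have hω2 : ω^2 ≤ Tb^2 := by
        rw [← sq_abs ω]; exact pow_le_pow_left₀ (abs_nonneg ω) h 2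
      nlinarith [hb, hC10, hC20, norm_nonneg (Y ω j k), sq_nonneg ω]
    · have hb := hlarge ω h j k
      have hω1 : 1 ≤ |ω| := le_trans hTb1 h
      have hω2 : 1 ≤ ω^2 := by rw [← sq_abs ω]; nlinarith
      have hωpos : (0:ℝ) < ω^2 := lt_of_lt_of_le one_pos hω2
      have hb' : ‖Y ω j k‖ * ω^2 ≤ C2 := by rw [← le_div_iff₀ hωpos]; exact hb
      nlinarith [norm_nonneg (Y ω j k), hC10, hC20, sq_nonneg Tb,
        mul_nonneg (norm_nonneg (Y ω j k)) (by linarith : (0:ℝ) ≤ ω^2 - 1)]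
  -- Part 3: assembly
  refine ⟨fun t => ((Fintype.card n : ℝ) * C) * (1 + t^2)⁻¹, ?_, ?_, ?_⟩
  · intro x hx y hy hxy
    have h1 : (0:ℝ) < 1 + x^2 := by positivity
    have h2 : (0:ℝ) < 1 + y^2 := by positivity
    apply mul_le_mul_of_nonneg_left _ (mul_nonneg (Nat.cast_nonneg _) hC0)
    apply inv_anti₀ h1
    have hxy2 : x^2 ≤ y^2 := pow_le_pow_left₀ hx hxy 2
    linarith
  · exact (integrable_inv_one_add_sq.const_mul ((Fintype.card n : ℝ) * C)).integrableOn
  · intro ω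
    refine Matrix.PosSemidef.of_dotProduct_mulVec_nonneg ?_ ?_
    · show _ᴴ = _
      rw [Matrix.conjTranspose_sub, Matrix.conjTranspose_smul, Matrix.conjTranspose_one,
        (hpsd ω).1, Complex.star_def, Complex.conj_ofReal]
    · intro v
      have hq := (hpsd ω).dotProduct_mulVec_nonneg v
      have hqim : (star v ⬝ᵥ Y ω *ᵥ v).im = 0 := ((Complex.le_def.mp hq).2).symm
      have hqb := auxY_quad_bound (Y ω) (C / (1+ω^2)) (fun j k => hC ω j k) v
      have hexp : star v ⬝ᵥ (((((Fintype.card n : ℝ) * C) * (1 + |ω|^2)⁻¹ : ℝ):ℂ)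
            • (1:Matrix n n ℂ) - Y ω) *ᵥ v
          = ((((Fintype.card n : ℝ) * C) * (1 + |ω|^2)⁻¹ : ℝ):ℂ) * (star v ⬝ᵥ v)
            - star v ⬝ᵥ Y ω *ᵥ v := by
        rw [Matrix.sub_mulVec, dotProduct_sub, Matrix.smul_mulVec,
          Matrix.one_mulVec, dotProduct_smul, smul_eq_mul]
      have hvv : star v ⬝ᵥ v = ((∑ j, ‖v j‖^2 : ℝ) : ℂ) := by
        rw [dotProduct, Complex.ofReal_sum]
        refine Finset.sum_congr rfl fun j _ => ?_
        rw [Pi.star_apply, Complex.star_def, mul_comm, Complex.mul_conj, Complex.normSq_eq_norm_sq,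
          Complex.ofReal_pow]
      have hqeq : star v ⬝ᵥ Y ω *ᵥ v = (((star v ⬝ᵥ Y ω *ᵥ v).re : ℝ) : ℂ) := by
        apply Complex.ext <;> simp [hqim]
      have hS0 : 0 ≤ ∑ j, ‖v j‖^2 := Finset.sum_nonneg fun _ _ => sq_nonneg _
      have hqre2 : (star v ⬝ᵥ Y ω *ᵥ v).re ≤ (C/(1+ω^2)) * (Fintype.card n : ℝ)
          * ∑ j, ‖v j‖^2 := by
        refine le_trans (Complex.re_le_norm _) ?_
        exact hqb
      rw [hexp, hvv, hqeq, ← Complex.ofReal_mul, ← Complex.ofReal_sub, Complex.zero_le_real]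
      have h1ω : (0:ℝ) < 1 + ω^2 := by positivity
      have heq : ((Fintype.card n : ℝ) * C) * (1+|ω|^2)⁻¹ * (∑ j, ‖v j‖^2)
          = (C/(1+ω^2)) * (Fintype.card n : ℝ) * ∑ j, ‖v j‖^2 := by
        rw [sq_abs, div_eq_mul_inv]
        ring
      linarith [hqre2, heq]
end

section
/- Let n be a finite index type and N a natural number. For i = 1,…,N let a_i > 0 and b_i be real numbers and X_i, Z_i real n×n matrices (viewed as complex matrices). Define Ψ_Y(iω) = Σ_{i=1}^{N} ((iω + a_i)·X_i + b_i·Z_i) / ((iω + a_i)² + b_i²) and Y(iω) = Ψ_Y(iω) + Ψ_Y(iω)ᴴ. Then the real-valued function ω ↦ Re(trace Y(iω)) has bounded variation on ℝ, i.e., its total variation over all of ℝ is finite. -/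
open Matrix

open Set

lemma evar_add (f g : ℝ → ℝ) (s : Set ℝ) :
    eVariationOn (fun x => f x + g x) s ≤ eVariationOn f s + eVariationOn g s := by
  apply iSup_le
  rintro ⟨n, u, hu, us⟩
  calc ∑ i ∈ Finset.range n, edist (f (u (i+1)) + g (u (i+1))) (f (u i) + g (u i))
      ≤ ∑ i ∈ Finset.range n,
          (edist (f (u (i+1))) (f (u i)) + edist (g (u (i+1))) (g (u i))) := by
        gcongr with i hi
        exact edist_add_add_le _ _ _ _
    _ = _ := Finset.sum_add_distrib
    _ ≤ _ := add_le_add (eVariationOn.sum_le (f := f) (n := n) hu us) (eVariationOn.sum_le (f := g) (n := n) hu us)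

lemma bv_add {f g : ℝ → ℝ} {s : Set ℝ} (hf : BoundedVariationOn f s)
    (hg : BoundedVariationOn g s) : BoundedVariationOn (fun x => f x + g x) s := by
  have := evar_add f g s
  intro h
  rw [h] at this
  exact (ENNReal.add_lt_top.2 ⟨hf.lt_top, hg.lt_top⟩).ne (top_le_iff.1 this)

lemma bv_const_mul {f : ℝ → ℝ} {s : Set ℝ} (c : ℝ) (hf : BoundedVariationOn f s) :
    BoundedVariationOn (fun x => c * f x) s :=
  (lipschitzWith_smul c).comp_boundedVariationOn hf

lemma evar_le_of_monotoneOn {f : ℝ → ℝ} {s : Set ℝ} (hf : MonotoneOn f s) {C : ℝ}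
    (hC : ∀ x ∈ s, |f x| ≤ C) : eVariationOn f s ≤ ENNReal.ofReal (2*C) := by
  apply iSup_le
  rintro ⟨n, u, hu, us⟩
  calc (∑ i ∈ Finset.range n, edist (f (u (i + 1))) (f (u i))) =
        ∑ i ∈ Finset.range n, ENNReal.ofReal (f (u (i + 1)) - f (u i)) := by
        refine Finset.sum_congr rfl fun i _ => ?_
        rw [edist_dist, Real.dist_eq, abs_of_nonneg]
        exact sub_nonneg_of_le (hf (us i) (us (i + 1)) (hu (Nat.le_succ _)))
    _ = ENNReal.ofReal (∑ i ∈ Finset.range n, (f (u (i + 1)) - f (u i))) := by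
        rw [ENNReal.ofReal_sum_of_nonneg]
        intro i _
        exact sub_nonneg_of_le (hf (us i) (us (i + 1)) (hu (Nat.le_succ _)))
    _ = ENNReal.ofReal (f (u n) - f (u 0)) := by rw [Finset.sum_range_sub fun i => f (u i)]
    _ ≤ ENNReal.ofReal (2*C) := by
        apply ENNReal.ofReal_le_ofReal
        have h1 := abs_le.1 (hC _ (us n))
        have h2 := abs_le.1 (hC _ (us 0))
        linarith

lemma evar_le_of_antitoneOn {f : ℝ → ℝ} {s : Set ℝ} (hf : AntitoneOn f s) {C : ℝ}
    (hC : ∀ x ∈ s, |f x| ≤ C) : eVariationOn f s ≤ ENNReal.ofReal (2*C) := by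
  apply iSup_le
  rintro ⟨n, u, hu, us⟩
  calc (∑ i ∈ Finset.range n, edist (f (u (i + 1))) (f (u i))) =
        ∑ i ∈ Finset.range n, ENNReal.ofReal (f (u i) - f (u (i+1))) := by
        refine Finset.sum_congr rfl fun i _ => ?_
        rw [edist_dist, Real.dist_eq, abs_sub_comm, abs_of_nonneg]
        exact sub_nonneg_of_le (hf (us i) (us (i + 1)) (hu (Nat.le_succ _)))
    _ = ENNReal.ofReal (∑ i ∈ Finset.range n, (f (u i) - f (u (i+1)))) := by
        rw [ENNReal.ofReal_sum_of_nonneg]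
        intro i _
        exact sub_nonneg_of_le (hf (us i) (us (i + 1)) (hu (Nat.le_succ _)))
    _ = ENNReal.ofReal (f (u 0) - f (u n)) := by
        rw [← Finset.sum_range_sub' fun i => f (u i)]
    _ ≤ ENNReal.ofReal (2*C) := by
        apply ENNReal.ofReal_le_ofReal
        have h1 := abs_le.1 (hC _ (us n))
        have h2 := abs_le.1 (hC _ (us 0))
        linarith

lemma bvP {p : ℝ} (hp : 0 < p) :
    BoundedVariationOn (fun t : ℝ => 1 / (p^2 + t^2)) univ := by
  set f : ℝ → ℝ := fun t => 1 / (p^2 + t^2) with hf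
  have hden : ∀ t : ℝ, 0 < p^2 + t^2 := fun t => by positivity
  have hbound : ∀ t : ℝ, |f t| ≤ 1/p^2 := by
    intro t
    rw [abs_of_pos (by positivity)]
    apply div_le_div_of_nonneg_left one_pos.le (by positivity)
    nlinarith [sq_nonneg t]
  have hmono : MonotoneOn f (Iic 0) := by
    intro s hs t ht hst
    simp only [f, mem_Iic] at *
    rw [div_le_div_iff₀ (hden s) (hden t)]
    nlinarith
  have hanti : AntitoneOn f (Ici 0) := by
    intro s hs t ht hst
    simp only [f, mem_Ici] at *
    rw [div_le_div_iff₀ (hden t) (hden s)]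
    nlinarith
  have hsplit : (univ : Set ℝ) = Iic 0 ∪ Ici 0 := (Iic_union_Ici).symm
  unfold BoundedVariationOn
  rw [hsplit, eVariationOn.union f isGreatest_Iic isLeast_Ici]
  exact (ENNReal.add_lt_top.2
    ⟨(evar_le_of_monotoneOn hmono (fun x _ => hbound x)).trans_lt ENNReal.ofReal_lt_top,
     (evar_le_of_antitoneOn hanti (fun x _ => hbound x)).trans_lt ENNReal.ofReal_lt_top⟩).ne

lemma bvQ {p : ℝ} (hp : 0 < p) :
    BoundedVariationOn (fun t : ℝ => t / (p^2 + t^2)) univ := by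
  set f : ℝ → ℝ := fun t => t / (p^2 + t^2) with hf
  have hden : ∀ t : ℝ, 0 < p^2 + t^2 := fun t => by positivity
  have hbound : ∀ t : ℝ, |f t| ≤ 1/p := by
    intro t
    rw [abs_div, abs_of_pos (hden t), div_le_div_iff₀ (hden t) hp]
    nlinarith [sq_nonneg (p - |t|), sq_abs t, abs_nonneg t]
  have hanti1 : AntitoneOn f (Iic (-p)) := by
    intro s hs t ht hst
    simp only [f, mem_Iic] at *
    rw [div_le_div_iff₀ (hden t) (hden s)]
    have hst2 : p^2 ≤ s*t := by nlinarith [mul_le_mul (show p ≤ -s by linarith) (show p ≤ -t by linarith) hp.le (by linarith : (0:ℝ) ≤ -s)]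
    nlinarith [mul_nonneg (sub_nonneg.2 hst) (sub_nonneg.2 hst2)]
  have hmono : MonotoneOn f (Icc (-p) p) := by
    rintro s ⟨hs1, hs2⟩ t ⟨ht1, ht2⟩ hst
    simp only [f] at *
    rw [div_le_div_iff₀ (hden s) (hden t)]
    have hst2 : s*t ≤ p^2 := by nlinarith [mul_nonneg (show (0:ℝ) ≤ p - s by linarith) (show (0:ℝ) ≤ p + t by linarith), mul_nonneg (show (0:ℝ) ≤ p + s by linarith) (show (0:ℝ) ≤ p - t by linarith)]
    nlinarith [mul_nonneg (sub_nonneg.2 hst) (sub_nonneg.2 hst2)]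
  have hanti2 : AntitoneOn f (Ici p) := by
    intro s hs t ht hst
    simp only [f, mem_Ici] at *
    rw [div_le_div_iff₀ (hden t) (hden s)]
    have hst2 : p^2 ≤ s*t := by nlinarith [mul_le_mul hs hst (by linarith) (by linarith : (0:ℝ) ≤ s)]
    nlinarith [mul_nonneg (sub_nonneg.2 hst) (sub_nonneg.2 hst2)]
  have hsplit : (univ : Set ℝ) = Iic (-p) ∪ (Icc (-p) p ∪ Ici p) := by
    rw [Icc_union_Ici_eq_Ici (by linarith), Iic_union_Ici]
  have hG : IsGreatest (Iic (-p)) (-p) := isGreatest_Iic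
  have hL : IsLeast (Icc (-p) p ∪ Ici p) (-p) := by
    constructor
    · exact Or.inl ⟨le_rfl, by linarith⟩
    · rintro x (⟨h1, _⟩ | h)
      · exact h1
      · linarith [mem_Ici.1 h]
  have hG2 : IsGreatest (Icc (-p) p) p := ⟨⟨by linarith, le_rfl⟩, fun x hx => hx.2⟩
  unfold BoundedVariationOn
  rw [hsplit, eVariationOn.union f hG hL, eVariationOn.union f hG2 isLeast_Ici]
  have e1 := (evar_le_of_antitoneOn hanti1 (fun x _ => hbound x)).trans_lt ENNReal.ofReal_lt_top
  have e2 := (evar_le_of_monotoneOn hmono (fun x _ => hbound x)).trans_lt ENNReal.ofReal_lt_top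
  have e3 := (evar_le_of_antitoneOn hanti2 (fun x _ => hbound x)).trans_lt ENNReal.ofReal_lt_top
  exact (ENNReal.add_lt_top.2 ⟨e1, ENNReal.add_lt_top.2 ⟨e2, e3⟩⟩).ne

lemma bv_core (w d : ℂ) (hd : 0 < d.re) :
    BoundedVariationOn (fun ω : ℝ => (w / (Complex.I * ω + d)).re) univ := by
  set p := d.re
  set q := d.im
  set g : ℝ → ℝ := fun t => (w.re * p) * (1 / (p^2 + t^2)) + w.im * (t / (p^2 + t^2)) with hg
  have hbg : BoundedVariationOn g univ :=
    bv_add (bv_const_mul _ (bvP hd)) (bv_const_mul _ (bvQ hd))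
  have heq : (fun ω : ℝ => (w / (Complex.I * ω + d)).re) = g ∘ (fun ω : ℝ => ω + q) := by
    funext ω
    have h1 : (Complex.I * ω + d).re = p := by simp [p]
    have h2 : (Complex.I * ω + d).im = ω + q := by simp [q]
    simp only [Complex.div_re, Complex.normSq_apply, h1, h2, hg, Function.comp]
    ring
  rw [heq]
  unfold BoundedVariationOn
  have hmon : Monotone (fun ω : ℝ => ω + q) := fun x y h => by dsimp only; linarith
  have hsurj : Function.Surjective (fun ω : ℝ => ω + q) := fun x => ⟨x - q, by ring⟩
  rw [eVariationOn.comp_eq_of_monotoneOn g _ ((hmon.monotoneOn univ))]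
  rwa [Set.image_univ, hsurj.range_eq]


lemma bv_const (c : ℝ) (s : Set ℝ) : BoundedVariationOn (fun _ : ℝ => c) s := by
  unfold BoundedVariationOn
  rw [eVariationOn.constant_on]
  · exact ENNReal.zero_ne_top
  · rintro x ⟨x', _, rfl⟩ y ⟨y', _, rfl⟩
    rfl

lemma bv_sum {ι : Type*} (t : Finset ι) (f : ι → ℝ → ℝ) (s : Set ℝ)
    (hf : ∀ i ∈ t, BoundedVariationOn (f i) s) :
    BoundedVariationOn (fun x => ∑ i ∈ t, f i x) s := by
  classical
  induction t using Finset.induction_on with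
  | empty => simpa using bv_const 0 s
  | insert _ _ hnotmem ih =>
    simp only [Finset.sum_insert hnotmem]
    exact bv_add (hf _ (Finset.mem_insert_self _ _))
      (ih fun i hi => hf i (Finset.mem_insert_of_mem hi))

theorem trace_Y_boundedVariation
    {n : Type*} [Fintype n] (N : ℕ)
    (a b : Fin N → ℝ) (ha : ∀ i, 0 < a i)
    (X Z : Fin N → Matrix n n ℝ)
    (ΨY : ℝ → Matrix n n ℂ)
    (hΨY : ∀ ω : ℝ, ΨY ω = ∑ i : Fin N,
        ((Complex.I * ω + a i) ^ 2 + (b i : ℂ) ^ 2)⁻¹ •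
          ((Complex.I * ω + a i) • (X i).map Complex.ofReal +
            (b i : ℂ) • (Z i).map Complex.ofReal))
    (Y : ℝ → Matrix n n ℂ)
    (hY : ∀ ω : ℝ, Y ω = ΨY ω + (ΨY ω)ᴴ) :
    BoundedVariationOn (fun ω : ℝ => ((Y ω).trace).re) Set.univ := by
  classical
  set x : Fin N → ℝ := fun i => (X i).trace with hx
  set z : Fin N → ℝ := fun i => (Z i).trace with hz
  set A : Fin N → ℂ := fun i => ((x i : ℂ) + Complex.I * z i) / 2 with hA
  set B : Fin N → ℂ := fun i => ((x i : ℂ) - Complex.I * z i) / 2 with hB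
  set d : Fin N → ℂ := fun i => (a i : ℂ) + Complex.I * b i with hd
  set e : Fin N → ℂ := fun i => (a i : ℂ) - Complex.I * b i with he
  have hd0 : ∀ i (ω : ℝ), Complex.I * ω + d i ≠ 0 := by
    intro i ω h
    have := congrArg Complex.re h
    simp [hd] at this
    exact (ha i).ne' this
  have he0 : ∀ i (ω : ℝ), Complex.I * ω + e i ≠ 0 := by
    intro i ω h
    have := congrArg Complex.re h
    simp [he] at this
    exact (ha i).ne' this
  -- trace of each map
  have htrX : ∀ i, ((X i).map Complex.ofReal).trace = (x i : ℂ) := by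
    intro i
    simp [Matrix.trace, Matrix.diag, hx, Matrix.map_apply]
  have htrZ : ∀ i, ((Z i).map Complex.ofReal).trace = (z i : ℂ) := by
    intro i
    simp [Matrix.trace, Matrix.diag, hz, Matrix.map_apply]
  -- key identity
  have key : ∀ ω : ℝ, ((Y ω).trace).re =
      ∑ i : Fin N, (2 * (A i / (Complex.I * ω + d i)).re
        + 2 * (B i / (Complex.I * ω + e i)).re) := by
    intro ω
    have h1 : (Y ω).trace = (ΨY ω).trace + star ((ΨY ω).trace) := by
      rw [hY, Matrix.trace_add, Matrix.trace_conjTranspose]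
    have h2 : ((Y ω).trace).re = 2 * ((ΨY ω).trace).re := by
      rw [h1]
      simp [Complex.add_re]
      ring
    have h3 : (ΨY ω).trace = ∑ i : Fin N,
        (((Complex.I * ω + a i) ^ 2 + (b i : ℂ) ^ 2)⁻¹ *
          ((Complex.I * ω + a i) * x i + (b i : ℂ) * z i)) := by
      rw [hΨY, Matrix.trace_sum]
      congr 1
      funext i
      rw [Matrix.trace_smul, Matrix.trace_add, Matrix.trace_smul, Matrix.trace_smul,
        htrX i, htrZ i]
      simp [smul_eq_mul]
    have h4 : ∀ i : Fin N,
        ((Complex.I * ω + a i) ^ 2 + (b i : ℂ) ^ 2)⁻¹ *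
          ((Complex.I * ω + a i) * x i + (b i : ℂ) * z i)
        = A i / (Complex.I * ω + d i) + B i / (Complex.I * ω + e i) := by
      intro i
      have hD : ((Complex.I * ω + a i) ^ 2 + (b i : ℂ) ^ 2)
          = (Complex.I * ω + d i) * (Complex.I * ω + e i) := by
        simp only [hd, he]
        ring_nf
        simp [Complex.I_sq]
        ring
      rw [hD]
      have h5 := hd0 i ω
      have h6 := he0 i ω
      simp only [hA, hB, hd, he] at *
      field_simp
      ring_nf
      simp only [show Complex.I ^ 2 = -1 from Complex.I_sq,
        show Complex.I ^ 3 = -Complex.I by rw [pow_succ, Complex.I_sq]; ring,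
        show Complex.I ^ 4 = 1 by rw [show (4:ℕ) = 2*2 from rfl, pow_mul, Complex.I_sq]; ring]
      ring
    rw [h2, h3, Complex.re_sum, Finset.mul_sum]
    congr 1
    funext i
    rw [h4 i, Complex.add_re]
    ring
  have : (fun ω : ℝ => ((Y ω).trace).re) = fun ω : ℝ =>
      ∑ i : Fin N, (2 * (A i / (Complex.I * ω + d i)).re
        + 2 * (B i / (Complex.I * ω + e i)).re) := funext key
  rw [this]
  exact bv_sum _ _ _ fun i _ => by
    have h1 : 0 < (d i).re := by simp [hd]; exact ha i
    have h2 : 0 < (e i).re := by simp [he]; exact ha i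
    exact bv_add (bv_const_mul 2 (bv_core (A i) (d i) h1))
      (bv_const_mul 2 (bv_core (B i) (e i) h2))
end

section
/- Let M be an n×n complex matrix. Then M + Mᴴ is positive definite if and only if I + M is invertible and the spectral norm (largest singular value) of (I − M)(I + M)⁻¹ is strictly less than 1. In other words, writing sect(M) = (I − M)(I + M)⁻¹ for the bilinear sector transformation, σ̄(sect(M)) < 1 (together with invertibility of I + M) holds exactly when M + Mᴴ ≻ 0. -/
open Matrix ComplexOrder

local notation "⟪" x ", " y "⟫" => @inner ℂ _ _ x y

private lemma aux_norm_lt_one {E F : Type*} [NormedAddCommGroup E] [NormedSpace ℂ E]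
    [FiniteDimensional ℂ E] [NormedAddCommGroup F] [NormedSpace ℂ F]
    (f : E →L[ℂ] F) (h : ∀ x : E, x ≠ 0 → ‖f x‖ < ‖x‖) : ‖f‖ < 1 := by
  rcases subsingleton_or_nontrivial E with hE | hE
  · have hf : f = 0 := by
      ext x
      rw [Subsingleton.elim x 0]
      simp
    simp [hf]
  · obtain ⟨x0, hx0⟩ := exists_norm_eq E (zero_le_one (α := ℝ))
    have hcpt : IsCompact (Metric.sphere (0:E) 1) := isCompact_sphere 0 1
    have hne : (Metric.sphere (0:E) 1).Nonempty := ⟨x0, by simp [hx0]⟩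
    obtain ⟨z, hz, hmax⟩ := hcpt.exists_isMaxOn hne (f.continuous.norm.continuousOn)
    have hz1 : ‖z‖ = 1 := by simpa using hz
    have hzne : z ≠ 0 := by
      intro h0
      rw [h0] at hz1; simp at hz1
    have hc : ‖f z‖ < 1 := by rw [← hz1]; exact h z hzne
    have hle : ‖f‖ ≤ ‖f z‖ := by
      refine f.opNorm_le_bound (norm_nonneg _) fun x => ?_
      rcases eq_or_ne x 0 with rfl | hx
      · simp
      · set y : E := ((‖x‖ : ℂ))⁻¹ • x with hy
        have hxpos : (0:ℝ) < ‖x‖ := norm_pos_iff.mpr hx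
        have hny : ‖y‖ = 1 := by
          rw [hy, norm_smul]
          simp [abs_of_pos hxpos, inv_mul_cancel₀ (ne_of_gt hxpos)]
        have hymem : y ∈ Metric.sphere (0:E) 1 := by simp [hny]
        have hfy : ‖f y‖ ≤ ‖f z‖ := hmax hymem
        have hfy2 : ‖f y‖ = ‖x‖⁻¹ * ‖f x‖ := by
          rw [hy, _root_.map_smul, norm_smul]
          simp [abs_of_pos hxpos]
        rw [hfy2] at hfy
        calc ‖f x‖ = ‖x‖ * (‖x‖⁻¹ * ‖f x‖) := by
              field_simp
          _ ≤ ‖x‖ * ‖f z‖ := by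
              exact mul_le_mul_of_nonneg_left hfy (le_of_lt hxpos)
          _ = ‖f z‖ * ‖x‖ := mul_comm _ _
    exact lt_of_le_of_lt hle hc

theorem sect_norm_lt_one_iff_posDef
    {n : Type*} [Fintype n] [DecidableEq n] (M : Matrix n n ℂ) :
    (M + Mᴴ).PosDef ↔
      IsUnit (1 + M) ∧
        ‖Matrix.toEuclideanCLM (𝕜 := ℂ) (n := n) ((1 - M) * (1 + M)⁻¹)‖ < 1 := by
  set A := Matrix.toEuclideanCLM (𝕜 := ℂ) (n := n) M with hA
  -- step 1: the key reformulation of positive definiteness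
  have key : (M + Mᴴ).PosDef ↔
      ∀ x : EuclideanSpace ℂ n, x ≠ 0 → ‖x - A x‖ < ‖x + A x‖ := by
    have herm : (M + Mᴴ).IsHermitian := isHermitian_add_transpose_self M
    have hdot : ∀ x : n → ℂ,
        dotProduct (star x) ((M + Mᴴ) *ᵥ x)
          = ((2 * Complex.re ⟪(WithLp.equiv 2 (n → ℂ)).symm x,
              A ((WithLp.equiv 2 (n → ℂ)).symm x)⟫ : ℝ) : ℂ) := by
      intro x
      have : ⟪(WithLp.equiv 2 (n → ℂ)).symm x, (WithLp.equiv 2 (n → ℂ)).symm ((M + Mᴴ) *ᵥ x)⟫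
          = dotProduct (star x) ((M + Mᴴ) *ᵥ x) := by
        rw [dotProduct_comm]; rfl
      rw [← this]
      have h2 : (WithLp.equiv 2 (n → ℂ)).symm ((M + Mᴴ) *ᵥ x)
          = Matrix.toEuclideanCLM (𝕜 := ℂ) (n := n) (M + Mᴴ) ((WithLp.equiv 2 (n → ℂ)).symm x) := by
        rfl
      rw [h2, _root_.map_add]
      have h3 : Matrix.toEuclideanCLM (𝕜 := ℂ) (n := n) Mᴴ = star A := by
        rw [hA, ← Matrix.star_eq_conjTranspose]
        exact map_star _ M
      rw [h3, ContinuousLinearMap.star_eq_adjoint]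
      set v := (WithLp.equiv 2 (n → ℂ)).symm x
      rw [ContinuousLinearMap.add_apply, inner_add_right,
        ContinuousLinearMap.adjoint_inner_right, ← inner_conj_symm (A v) v]
      rw [Complex.add_conj]
    constructor
    · rw [Matrix.posDef_iff_dotProduct_mulVec]
      rintro ⟨_, hP⟩ v hv
      set x : n → ℂ := WithLp.equiv 2 (n → ℂ) v with hx
      have hveq : (WithLp.equiv 2 (n → ℂ)).symm x = v := by simp [hx]
      have hxne : x ≠ 0 := by
        intro h0
        apply hv
        rw [← hveq, h0]
        rfl
      have := hP (x := x) hxne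
      rw [hdot x, hveq] at this
      have hre : 0 < Complex.re ⟪v, A v⟫ := by
        have h01 : (0:ℝ) < 2 * Complex.re ⟪v, A v⟫ := by
          exact_mod_cast Complex.zero_lt_real.mp (by exact_mod_cast this)
        linarith
      have hsq : ‖v + A v‖ ^ 2 - ‖v - A v‖ ^ 2 = 4 * Complex.re ⟪v, A v⟫ := by
        rw [@norm_add_sq ℂ _ _ _ _ v (A v), @norm_sub_sq ℂ _ _ _ _ v (A v)]
        ring_nf
        rfl
      nlinarith [norm_nonneg (v + A v), norm_nonneg (v - A v)]
    · intro h
      refine Matrix.posDef_iff_dotProduct_mulVec.mpr ⟨herm, fun x hxne => ?_⟩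
      set v := (WithLp.equiv 2 (n → ℂ)).symm x with hv
      have hvne : v ≠ 0 := by
        intro h0
        apply hxne
        have : WithLp.equiv 2 (n → ℂ) v = WithLp.equiv 2 (n → ℂ) 0 := by rw [h0]
        simpa [hv] using this
      have hlt := h v hvne
      have hsq : ‖v + A v‖ ^ 2 - ‖v - A v‖ ^ 2 = 4 * Complex.re ⟪v, A v⟫ := by
        rw [@norm_add_sq ℂ _ _ _ _ v (A v), @norm_sub_sq ℂ _ _ _ _ v (A v)]
        ring_nf
        rfl
      have hre : 0 < Complex.re ⟪v, A v⟫ := by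
        nlinarith [norm_nonneg (v + A v), norm_nonneg (v - A v)]
      rw [hdot x]
      exact_mod_cast Complex.zero_lt_real.mpr (by linarith)
  -- helper: (1+M) *ᵥ x corresponds to v + A v
  have hAv : ∀ x : n → ℂ,
      (WithLp.equiv 2 (n → ℂ)).symm ((1 + M) *ᵥ x)
        = (WithLp.equiv 2 (n → ℂ)).symm x + A ((WithLp.equiv 2 (n → ℂ)).symm x) := by
    intro x
    have h2 : (WithLp.equiv 2 (n → ℂ)).symm (M *ᵥ x)
        = A ((WithLp.equiv 2 (n → ℂ)).symm x) := by
      rw [hA]; rfl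
    rw [Matrix.add_mulVec, Matrix.one_mulVec, ← h2]
    rfl
  constructor
  · intro hP
    have hlt := key.mp hP
    -- injectivity, hence invertibility, of 1 + M
    have hker : ∀ v : EuclideanSpace ℂ n, v + A v = 0 → v = 0 := by
      intro v hv0
      by_contra hvne
      have h1 := hlt v hvne
      rw [hv0, norm_zero] at h1
      exact absurd h1 (not_lt.mpr (norm_nonneg _))
    have hunit : IsUnit (1 + M) := by
      rw [← Matrix.mulVec_injective_iff_isUnit]
      have : Function.Injective ((1 + M).mulVecLin) := by
        rw [injective_iff_map_eq_zero]
        intro x hx0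
        have h0 : (1 + M) *ᵥ x = 0 := by rwa [Matrix.mulVecLin_apply] at hx0
        have := hker ((WithLp.equiv 2 (n → ℂ)).symm x) (by rw [← hAv, h0]; rfl)
        have hx : x = WithLp.equiv 2 (n → ℂ) ((WithLp.equiv 2 (n → ℂ)).symm x) := by simp
        rw [hx, this]
        rfl
      exact Matrix.coe_mulVecLin (1 + M) ▸ this
    refine ⟨hunit, ?_⟩
    have hdet : IsUnit (1 + M).det := Matrix.isUnit_iff_isUnit_det _ |>.mp hunit
    set B := Matrix.toEuclideanCLM (𝕜 := ℂ) (n := n) ((1 + M)⁻¹) with hB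
    have h1A : Matrix.toEuclideanCLM (𝕜 := ℂ) (n := n) (1 + M) = 1 + A := by
      rw [_root_.map_add, _root_.map_one, hA]
    have hB2 : (1 + A) * B = 1 := by
      rw [← h1A, hB, ← _root_.map_mul, Matrix.mul_nonsing_inv _ hdet, _root_.map_one]
    have hB1 : B * (1 + A) = 1 := by
      rw [← h1A, hB, ← _root_.map_mul, Matrix.nonsing_inv_mul _ hdet, _root_.map_one]
    have hS : Matrix.toEuclideanCLM (𝕜 := ℂ) (n := n) ((1 - M) * (1 + M)⁻¹)
        = (1 - A) * B := by
      rw [_root_.map_mul, _root_.map_sub, _root_.map_one, hA, hB]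
    rw [hS]
    refine aux_norm_lt_one _ fun y hy => ?_
    set x := B y with hx
    have hxy : (1 + A) x = y := by
      rw [hx, ← ContinuousLinearMap.mul_apply, hB2, ContinuousLinearMap.one_apply]
    have hxne : x ≠ 0 := by
      intro h0
      apply hy
      rw [← hxy, h0, map_zero]
    have hSy : ((1 - A) * B) y = x - A x := by
      rw [ContinuousLinearMap.mul_apply, ← hx, ContinuousLinearMap.sub_apply,
        ContinuousLinearMap.one_apply]
    rw [hSy, ← hxy]
    have : (1 + A) x = x + A x := by
      rw [ContinuousLinearMap.add_apply, ContinuousLinearMap.one_apply]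
    rw [this]
    exact hlt x hxne
  · rintro ⟨hunit, hnorm⟩
    have hdet : IsUnit (1 + M).det := Matrix.isUnit_iff_isUnit_det _ |>.mp hunit
    set B := Matrix.toEuclideanCLM (𝕜 := ℂ) (n := n) ((1 + M)⁻¹) with hB
    have h1A : Matrix.toEuclideanCLM (𝕜 := ℂ) (n := n) (1 + M) = 1 + A := by
      rw [_root_.map_add, _root_.map_one, hA]
    have hB2 : (1 + A) * B = 1 := by
      rw [← h1A, hB, ← _root_.map_mul, Matrix.mul_nonsing_inv _ hdet, _root_.map_one]
    have hB1 : B * (1 + A) = 1 := by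
      rw [← h1A, hB, ← _root_.map_mul, Matrix.nonsing_inv_mul _ hdet, _root_.map_one]
    have hS : Matrix.toEuclideanCLM (𝕜 := ℂ) (n := n) ((1 - M) * (1 + M)⁻¹)
        = (1 - A) * B := by
      rw [_root_.map_mul, _root_.map_sub, _root_.map_one, hA, hB]
    rw [hS] at hnorm
    refine key.mpr fun x hxne => ?_
    set y := x + A x with hy
    have hyeq : (1 + A) x = y := by
      rw [ContinuousLinearMap.add_apply, ContinuousLinearMap.one_apply, hy]
    have hxy : B y = x := by
      rw [← hyeq, ← ContinuousLinearMap.mul_apply, hB1, ContinuousLinearMap.one_apply]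
    have hyne : y ≠ 0 := by
      intro h0
      apply hxne
      rw [← hxy, h0, map_zero]
    have hSy : ((1 - A) * B) y = x - A x := by
      rw [ContinuousLinearMap.mul_apply, hxy, ContinuousLinearMap.sub_apply,
        ContinuousLinearMap.one_apply]
    calc ‖x - A x‖ = ‖((1 - A) * B) y‖ := by rw [hSy]
      _ ≤ ‖(1 - A) * B‖ * ‖y‖ := ContinuousLinearMap.le_opNorm _ _
      _ < 1 * ‖y‖ := by
          exact mul_lt_mul_of_pos_right hnorm (norm_pos_iff.mpr hyne)
      _ = ‖x + A x‖ := by rw [one_mul, hy]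
end

section
/- Let m, n, r be finite index types, and let G be an m×n, Σ an r×m, φ an n×m, and Ψ an n×n complex matrix. Define the block matrix P = [[φG + Ψ, 0], [ΣG, −(1/2)·I]] of size (n+r)×(n+r). If I − P is invertible and the spectral norm (largest singular value) of sect(−P) = (I + P)(I − P)⁻¹ is strictly less than 1, then the Hermitian matrix GᴴΣᴴΣG + Gᴴφᴴ + φG + Ψ + Ψᴴ is negative definite; in particular there exists ε > 0 such that GᴴΣᴴΣG + Gᴴφᴴ + φG + Ψ + Ψᴴ ≼ −εI. -/
open Matrix ComplexOrder

lemma conj_quadform {m n : Type*} [Fintype m] [Fintype n] (M : Matrix n m ℂ) (a : m → ℂ) (b : n → ℂ) :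
    star (star b ⬝ᵥ (M *ᵥ a)) = star a ⬝ᵥ (Mᴴ *ᵥ b) := by
  rw [Matrix.star_dotProduct, star_star, Matrix.star_mulVec, Matrix.dotProduct_mulVec]

lemma sect_quad_neg {n : Type*} [Fintype n] [DecidableEq n] (Q : Matrix n n ℂ)
    (hinv : IsUnit (1 - Q))
    (hnorm : ‖Matrix.toEuclideanCLM (𝕜 := ℂ) (n := n) ((1 + Q) * (1 - Q)⁻¹)‖ < 1)
    (x : n → ℂ) (hx : x ≠ 0) : (star x ⬝ᵥ (Q *ᵥ x)).re < 0 := by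
  have hdet : IsUnit (1 - Q).det := (Matrix.isUnit_iff_isUnit_det _).mp hinv
  set c : ℝ := ‖Matrix.toEuclideanCLM (𝕜 := ℂ) (n := n) ((1 + Q) * (1 - Q)⁻¹)‖ with hc
  have hc0 : 0 ≤ c := norm_nonneg _
  set v : EuclideanSpace ℂ n := (WithLp.equiv 2 _).symm x with hv
  set p : EuclideanSpace ℂ n := (WithLp.equiv 2 _).symm (Q *ᵥ x) with hp
  have h1 : ((1 + Q) * (1 - Q)⁻¹) *ᵥ ((1 - Q) *ᵥ x) = (1 + Q) *ᵥ x := by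
    rw [Matrix.mulVec_mulVec, Matrix.mul_assoc, Matrix.nonsing_inv_mul _ hdet, Matrix.mul_one]
  have hle : ‖v + p‖ ≤ c * ‖v - p‖ := by
    have := (Matrix.toEuclideanCLM (𝕜 := ℂ) (n := n) ((1 + Q) * (1 - Q)⁻¹)).le_opNorm
      ((WithLp.equiv 2 _).symm ((1 - Q) *ᵥ x))
    rw [WithLp.equiv_symm_apply, Matrix.toEuclideanCLM_toLp, ← WithLp.equiv_symm_apply, h1] at this
    have e1 : ((WithLp.equiv 2 (n → ℂ)).symm ((1 + Q) *ᵥ x) : EuclideanSpace ℂ n) = v + p := by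
      rw [Matrix.add_mulVec, Matrix.one_mulVec]; rfl
    have e2 : ((WithLp.equiv 2 (n → ℂ)).symm ((1 - Q) *ᵥ x) : EuclideanSpace ℂ n) = v - p := by
      rw [Matrix.sub_mulVec, Matrix.one_mulVec]; rfl
    rwa [e1, e2] at this
  have hsq : ‖v + p‖ ^ 2 ≤ c ^ 2 * ‖v - p‖ ^ 2 := by
    have := mul_self_le_mul_self (norm_nonneg _) hle
    calc ‖v + p‖ ^ 2 = ‖v + p‖ * ‖v + p‖ := sq ..
      _ ≤ (c * ‖v - p‖) * (c * ‖v - p‖) := this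
      _ = c ^ 2 * ‖v - p‖ ^ 2 := by ring
  have hva : ‖v + p‖ ^ 2 = ‖v‖ ^ 2 + 2 * RCLike.re (inner ℂ v p : ℂ) + ‖p‖ ^ 2 := norm_add_sq v p
  have hvs : ‖v - p‖ ^ 2 = ‖v‖ ^ 2 - 2 * RCLike.re (inner ℂ v p : ℂ) + ‖p‖ ^ 2 := norm_sub_sq v p
  have hvpos : 0 < ‖v‖ ^ 2 := by
    have : v ≠ 0 := fun h => hx ((WithLp.equiv 2 (n → ℂ)).symm.injective (h.trans rfl))
    exact pow_pos (norm_pos_iff.mpr this) 2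
  have hinner : (inner ℂ v p : ℂ) = star x ⬝ᵥ (Q *ᵥ x) := by
    rw [dotProduct_comm]; exact EuclideanSpace.inner_toLp_toLp x (Q *ᵥ x)
  rw [show (star x ⬝ᵥ Q *ᵥ x).re = RCLike.re (inner ℂ v p : ℂ) by rw [hinner]; rfl]
  have h1c : (0:ℝ) < 1 - c ^ 2 := by nlinarith
  have hppos : (0:ℝ) ≤ ‖p‖ ^ 2 := sq_nonneg _
  nlinarith [mul_pos h1c (by positivity : (0:ℝ) < ‖v‖ ^ 2 + ‖p‖ ^ 2), sq_nonneg c, hsq, hva, hvs]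

lemma posdef_shift {n : Type*} [Fintype n] [DecidableEq n] {K : Matrix n n ℂ}
    (hK : K.PosDef) : ∃ ε : ℝ, 0 < ε ∧ (K - (ε : ℂ) • (1 : Matrix n n ℂ)).PosSemidef := by
  obtain ⟨ε, hε, hεle⟩ : ∃ ε : ℝ, 0 < ε ∧ ∀ i, ε ≤ hK.1.eigenvalues i := by
    rcases isEmpty_or_nonempty n with h | h
    · exact ⟨1, one_pos, fun i => (IsEmpty.false i).elim⟩
    · refine ⟨Finset.univ.inf' Finset.univ_nonempty hK.1.eigenvalues, ?_,
        fun i => Finset.inf'_le _ (Finset.mem_univ i)⟩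
      exact (Finset.lt_inf'_iff _).mpr fun i _ => hK.eigenvalues_pos i
  refine ⟨ε, hε, ?_⟩
  have hU : (hK.1.eigenvectorUnitary : Matrix n n ℂ) * star (hK.1.eigenvectorUnitary : Matrix n n ℂ) = 1 :=
    (Matrix.mem_unitaryGroup_iff).mp hK.1.eigenvectorUnitary.2
  have hdec : K - (ε : ℂ) • (1 : Matrix n n ℂ) =
      (hK.1.eigenvectorUnitary : Matrix n n ℂ) *
        (Matrix.diagonal (RCLike.ofReal ∘ hK.1.eigenvalues) - (ε : ℂ) • 1) *
        star (hK.1.eigenvectorUnitary : Matrix n n ℂ) := by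
    have hs := hK.1.spectral_theorem
    rw [Unitary.conjStarAlgAut_apply] at hs
    rw [Matrix.mul_sub, Matrix.sub_mul, ← hs]
    congr 1
    rw [Matrix.mul_smul, Matrix.mul_one, Matrix.smul_mul, hU]
  rw [hdec, Matrix.star_eq_conjTranspose]
  refine Matrix.PosSemidef.mul_mul_conjTranspose_same ?_ _
  have : Matrix.diagonal (RCLike.ofReal ∘ hK.1.eigenvalues) - (ε : ℂ) • (1 : Matrix n n ℂ) =
      Matrix.diagonal (fun i => ((hK.1.eigenvalues i - ε : ℝ) : ℂ)) := by
    ext i j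
    by_cases h : i = j <;>
      simp [Matrix.diagonal_apply, Matrix.one_apply, h, Complex.ofReal_sub]
  rw [this]
  refine Matrix.PosSemidef.diagonal fun i => ?_
  exact Complex.zero_le_real.mpr (by linarith [hεle i])

theorem sect_condition_implies_fdi
    {m n r : Type*} [Fintype m] [Fintype n] [Fintype r]
    [DecidableEq n] [DecidableEq r]
    (G : Matrix m n ℂ) (S : Matrix r m ℂ) (φ : Matrix n m ℂ) (Ψ : Matrix n n ℂ)
    (P : Matrix (n ⊕ r) (n ⊕ r) ℂ)
    (hP : P = Matrix.fromBlocks (φ * G + Ψ) 0 (S * G) ((-(1 / 2) : ℂ) • 1))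
    (hinv : IsUnit (1 - P))
    (hnorm : ‖Matrix.toEuclideanCLM (𝕜 := ℂ) (n := n ⊕ r) ((1 + P) * (1 - P)⁻¹)‖ < 1) :
    (-(Gᴴ * Sᴴ * S * G + Gᴴ * φᴴ + φ * G + Ψ + Ψᴴ)).PosDef ∧
      ∃ ε : ℝ, 0 < ε ∧
        (((-ε : ℝ) : ℂ) • (1 : Matrix n n ℂ) -
          (Gᴴ * Sᴴ * S * G + Gᴴ * φᴴ + φ * G + Ψ + Ψᴴ)).PosSemidef := by
  have hHerm : (-(Gᴴ * Sᴴ * S * G + Gᴴ * φᴴ + φ * G + Ψ + Ψᴴ)).IsHermitian := by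
    simp only [Matrix.IsHermitian, conjTranspose_neg, conjTranspose_add, conjTranspose_mul,
      conjTranspose_conjTranspose, Matrix.mul_assoc]
    abel
  have hPD : (-(Gᴴ * Sᴴ * S * G + Gᴴ * φᴴ + φ * G + Ψ + Ψᴴ)).PosDef := by
    refine Matrix.PosDef.of_dotProduct_mulVec_pos hHerm fun w hw => ?_
    set y : r → ℂ := (S * G) *ᵥ w with hy
    set x : n ⊕ r → ℂ := Sum.elim w y with hxdef
    have hx : x ≠ 0 := by
      intro h
      exact hw (funext fun i => congrFun h (Sum.inl i))
    have hre : (star x ⬝ᵥ (P *ᵥ x)).re < 0 := sect_quad_neg P hinv hnorm x hx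
    set z : ℂ := star x ⬝ᵥ (P *ᵥ x) with hzdef
    have e4 : star (star y ⬝ᵥ y) = star y ⬝ᵥ y := (Matrix.star_dotProduct y y).symm
    have hz : z = star w ⬝ᵥ ((φ * G + Ψ) *ᵥ w) + (1 / 2 : ℂ) * (star y ⬝ᵥ y) := by
      rw [hzdef, hP, hxdef]
      simp only [Function.star_sumElim, Matrix.fromBlocks_mulVec,
        sumElim_dotProduct_sumElim, Matrix.zero_mulVec, add_zero,
        Matrix.smul_mulVec, Matrix.one_mulVec, dotProduct_add,
        dotProduct_smul, smul_eq_mul, Sum.elim_comp_inl, Sum.elim_comp_inr]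
      ring
    have hzz : z + star z =
        star w ⬝ᵥ ((φ * G + Ψ) *ᵥ w) + star (star w ⬝ᵥ ((φ * G + Ψ) *ᵥ w)) + star y ⬝ᵥ y := by
      have hhalf : star ((1 / 2 : ℂ)) = (1 / 2 : ℂ) := by norm_num
      rw [hz, star_add, star_mul', hhalf, e4]
      ring
    have e1 : star w ⬝ᵥ ((Gᴴ * Sᴴ * S * G) *ᵥ w) = star y ⬝ᵥ y := by
      have : Gᴴ * Sᴴ * S * G = (S * G)ᴴ * (S * G) := by
        rw [conjTranspose_mul]; exact Matrix.mul_assoc _ _ _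
      rw [this, ← Matrix.mulVec_mulVec, ← conj_quadform, ← hy, e4]
    have e2 : star w ⬝ᵥ ((Gᴴ * φᴴ) *ᵥ w) = star (star w ⬝ᵥ ((φ * G) *ᵥ w)) := by
      rw [conj_quadform, conjTranspose_mul]
    have e3 : star w ⬝ᵥ (Ψᴴ *ᵥ w) = star (star w ⬝ᵥ (Ψ *ᵥ w)) := by
      rw [conj_quadform]
    have hq : star w ⬝ᵥ ((Gᴴ * Sᴴ * S * G + Gᴴ * φᴴ + φ * G + Ψ + Ψᴴ) *ᵥ w) = z + star z := by
      rw [hzz]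
      simp only [Matrix.add_mulVec, dotProduct_add, star_add, e1, e2, e3]
      ring
    have hqr : star w ⬝ᵥ ((Gᴴ * Sᴴ * S * G + Gᴴ * φᴴ + φ * G + Ψ + Ψᴴ) *ᵥ w) =
        ((2 * z.re : ℝ) : ℂ) := by
      rw [hq, Complex.star_def, Complex.add_conj]
    rw [Matrix.neg_mulVec, dotProduct_neg, hqr]
    rw [← Complex.ofReal_neg]
    rw [show ((0:ℂ) = ((0:ℝ):ℂ)) by norm_num, Complex.real_lt_real]
    linarith
  refine ⟨hPD, ?_⟩
  obtain ⟨ε, hε, hps⟩ := posdef_shift hPD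
  refine ⟨ε, hε, ?_⟩
  have heq : ((-ε : ℝ) : ℂ) • (1 : Matrix n n ℂ) -
      (Gᴴ * Sᴴ * S * G + Gᴴ * φᴴ + φ * G + Ψ + Ψᴴ) =
      (-(Gᴴ * Sᴴ * S * G + Gᴴ * φᴴ + φ * G + Ψ + Ψᴴ)) - (ε : ℂ) • 1 := by
    rw [Complex.ofReal_neg, neg_smul]
    abel
  rw [heq]
  exact hps
end
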